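/- arXiv:1301.0784 — 3 statements merged into one kernel-verified Lean document; each statement's English description precedes it below -/
import Mathlib

section
/- Let L be the line (path) on [n], I_L its binomial edge ideal, and g = x_1 y_n − x_n y_1. For every nonempty T ⊆ [n] such that P_T(L) is a minimal prime of I_L, one has g ∉ P_T(L). -/
open MvPolynomial CategoryTheory Opposite

noncomputable section

namespace BEIPaper

/-- The `x_i` variable of the polynomial ring `K[x_1,…,x_n,y_1,…,y_n]`,
which we realize as `MvPolynomial (σ ⊕ σ) K`, where `Sum.inl i ↦ x_i` and
`Sum.inr i ↦ y_i`. -/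
def xv (K : Type) [Field K] {σ : Type} (i : σ) : MvPolynomial (σ ⊕ σ) K :=
  X (Sum.inl i)

/-- The `y_i` variable. -/
def yv (K : Type) [Field K] {σ : Type} (i : σ) : MvPolynomial (σ ⊕ σ) K :=
  X (Sum.inr i)

/-- The binomial edge ideal of a graph `G` on the vertex set `[n]`:
generated by the binomials `x_i y_j - x_j y_i` for edges `{i, j}` with `i < j`. -/
def bei (K : Type) [Field K] {n : ℕ} (G : SimpleGraph (Fin n)) :
    Ideal (MvPolynomial (Fin n ⊕ Fin n) K) :=
  Ideal.span {f | ∃ i j : Fin n, i < j ∧ G.Adj i j ∧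
    f = xv K i * yv K j - xv K j * yv K i}

/-- The prime ideal `P_T(G)`: generated by `{x_i, y_i : i ∈ T}` together with the
binomial edge ideals of the complete graphs on the vertex sets of the connected
components of the induced subgraph of `G` on `[n] ∖ T` (equivalently, all binomials
`x_i y_j - x_j y_i` where `i < j` lie outside `T` in the same connected component). -/
def PT (K : Type) [Field K] {n : ℕ} (G : SimpleGraph (Fin n)) (T : Set (Fin n)) :
    Ideal (MvPolynomial (Fin n ⊕ Fin n) K) :=
  Ideal.span ((xv K '' T) ∪ (yv K '' T) ∪
    {f | ∃ i j : Fin n, ∃ (hi : i ∈ Tᶜ) (hj : j ∈ Tᶜ), i < j ∧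
      (G.induce Tᶜ).Reachable ⟨i, hi⟩ ⟨j, hj⟩ ∧
      f = xv K i * yv K j - xv K j * yv K i})

/-- `c(T)`: the number of connected components of the induced subgraph of `G`
on `[n] ∖ T`. -/
def ncomp {n : ℕ} (G : SimpleGraph (Fin n)) (T : Set (Fin n)) : ℕ :=
  Nat.card (G.induce Tᶜ).ConnectedComponent

/-- The graded (irrelevant) maximal ideal of a polynomial ring, generated by
all the variables. -/
def mIdeal (K : Type) [Field K] (σ : Type) : Ideal (MvPolynomial σ K) :=
  Ideal.span (Set.range X)

/-- The depth of a module `M` with respect to an ideal `I`: the supremum of lengths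
of `M`-regular sequences consisting of elements of `I`. -/
def depth {R : Type} [CommRing R] (I : Ideal R) (M : Type) [AddCommGroup M]
    [Module R M] : ℕ∞ :=
  sSup {k : ℕ∞ | ∃ rs : List R, (rs.length : ℕ∞) = k ∧ (∀ r ∈ rs, r ∈ I) ∧
    RingTheory.Sequence.IsRegular M rs}

/-- The (Krull) dimension of a module: the Krull dimension of `R` modulo the
annihilator of `M`. -/
def mdim (R : Type) [CommRing R] (M : Type) [AddCommGroup M] [Module R M] :
    WithBot ℕ∞ :=
  ringKrullDim (R ⧸ Module.annihilator R M)

/-- `M` is a Cohen-Macaulay `R`-module of dimension `d` (depth and dimension both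
being taken with respect to the given (maximal graded) ideal `I`). -/
def IsCMmodOfDim {R : Type} [CommRing R] (I : Ideal R) (M : Type) [AddCommGroup M]
    [Module R M] (d : ℕ) : Prop :=
  (depth I M : WithBot ℕ∞) = mdim R M ∧ mdim R M = (d : ℕ∞)

/-- The quotient `S/J` of a polynomial ring `S` by an ideal `J` is a Cohen-Macaulay
ring: its depth with respect to the graded maximal ideal equals its Krull dimension. -/
def IsCMQuot (K : Type) [Field K] {σ : Type} (J : Ideal (MvPolynomial σ K)) : Prop :=
  (depth (mIdeal K σ) (MvPolynomial σ K ⧸ J) : WithBot ℕ∞) =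
    ringKrullDim (MvPolynomial σ K ⧸ J)

/-- `S/I` is approximately Cohen-Macaulay: there is a homogeneous element `x` of
positive degree in the irrelevant ideal of `R = S/I` (i.e. the image of a homogeneous
polynomial `f` of positive degree) such that `R/x^m R = S/(I + (f^m))` is a
Cohen-Macaulay ring of dimension `dim R - 1` for all `m ≥ 1`. -/
def IsACM (K : Type) [Field K] {σ : Type} (I : Ideal (MvPolynomial σ K)) : Prop :=
  ∃ (d : ℕ) (f : MvPolynomial σ K), 0 < d ∧ f.IsHomogeneous d ∧
    ∀ m : ℕ, 1 ≤ m →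
      IsCMQuot K (I ⊔ Ideal.span {f ^ m}) ∧
      ringKrullDim (MvPolynomial σ K ⧸ (I ⊔ Ideal.span {f ^ m})) + 1 =
        ringKrullDim (MvPolynomial σ K ⧸ I)

/-- The Hilbert series of `S/I` (for a homogeneous ideal `I`), as a power series
over `ℤ`: the `m`-th coefficient is the `K`-dimension of the degree-`m` graded
component of `S/I`, i.e. of the image of the space of degree-`m` homogeneous
polynomials in `S/I`. -/
def hseries (K : Type) [Field K] {σ : Type} (I : Ideal (MvPolynomial σ K)) :
    PowerSeries ℤ :=
  PowerSeries.mk fun m =>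
    (Module.finrank K (Submodule.map (Ideal.Quotient.mkₐ K I).toLinearMap
      (homogeneousSubmodule σ K m)) : ℤ)

/-- The formal power series variable `t`. -/
def t : PowerSeries ℤ := PowerSeries.X

/-- The equidimensional part `U_S(I)` of (a minimal primary decomposition of) `I`:
the intersection of the primary components `I(p)` over the associated primes `p`
with `dim S/p = dim S/I`.  Any such `p` is a minimal prime of `I`, so its primary
component is independent of the decomposition and equals the saturation
`{x | ∃ s ∉ p, s * x ∈ I}`. -/
def USideal {R : Type} [CommRing R] (I : Ideal R) : Ideal R :=
  sInf {J | ∃ p ∈ associatedPrimes R (R ⧸ I),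
    ringKrullDim (R ⧸ p) = ringKrullDim (R ⧸ I) ∧
    J = Ideal.span {x | ∃ s ∉ p, s * x ∈ I}}

/-- `Ext_S^j(S/I, S)`, as an object of `ModuleCat S`.  The `i`-th module of
deficiency of `S/I` is `ω^i(S/I) = Ext_S^{2n-i}(S/I, S)`, i.e. `extSI K I (2*n - i)`. -/
def extSI (K : Type) [Field K] {σ : Type} (I : Ideal (MvPolynomial σ K)) (j : ℕ) :
    ModuleCat (MvPolynomial σ K) :=
  ((Ext (MvPolynomial σ K) (ModuleCat (MvPolynomial σ K)) j).obj
      (op (ModuleCat.of (MvPolynomial σ K) (MvPolynomial σ K ⧸ I)))).obj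
    (ModuleCat.of (MvPolynomial σ K) (MvPolynomial σ K))

/-- The line (path) graph on `[n]` (with `[n]` realized as `Fin n`), with edges
`{i, i+1}` for `1 ≤ i ≤ n-1`. -/
def lineG (n : ℕ) : SimpleGraph (Fin n) :=
  SimpleGraph.fromRel (fun a b => (b : ℕ) = (a : ℕ) + 1)

/-- The cycle of length `n` on `[n]` (with `[n]` realized as `Fin n`), with edges
`{i, i+1}` for `1 ≤ i ≤ n-1` together with `{1, n}`. -/
def cycleG (n : ℕ) : SimpleGraph (Fin n) :=
  SimpleGraph.fromRel (fun a b =>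
    (b : ℕ) = (a : ℕ) + 1 ∨ ((a : ℕ) = 0 ∧ (b : ℕ) = n - 1))

/-- The binomial `g = x_1 y_n - x_n y_1`. -/
def gElt (K : Type) [Field K] {n : ℕ} (hn : 0 < n) : MvPolynomial (Fin n ⊕ Fin n) K :=
  xv K ⟨0, hn⟩ * yv K ⟨n - 1, by omega⟩ - xv K ⟨n - 1, by omega⟩ * yv K ⟨0, hn⟩

/-- The `i`-th generator `x_2 x_3 ⋯ x_i y_{i+1} ⋯ y_{n-1}` (for `i = 1, …, n-1`)
of the monomial ideal `M`; the product ranges over the labels `p = 2, …, n-1`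
(`0`-indexed: `q = p - 1` with `1 ≤ q ≤ n-2`), taking `x_p` when `p ≤ i` and
`y_p` when `p > i`. -/
def mgen (K : Type) [Field K] (n : ℕ) (i : ℕ) : MvPolynomial (Fin n ⊕ Fin n) K :=
  ∏ q ∈ Finset.univ.filter (fun q : Fin n => 0 < (q : ℕ) ∧ (q : ℕ) < n - 1),
    (if (q : ℕ) + 1 ≤ i then xv K q else yv K q)

/-- The monomial ideal
`M = (x_2 x_3 ⋯ x_{n-1}, x_2 x_3 ⋯ x_{n-2} y_{n-1}, …, x_2 y_3 ⋯ y_{n-1}, y_2 y_3 ⋯ y_{n-1})`. -/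
def monoM (K : Type) [Field K] (n : ℕ) : Ideal (MvPolynomial (Fin n ⊕ Fin n) K) :=
  Ideal.span {f | ∃ i : ℕ, 1 ≤ i ∧ i ≤ n - 1 ∧ f = mgen K n i}

/-- The degree of a vertex, as the cardinality of its neighbor set. -/
def deg {n : ℕ} (G : SimpleGraph (Fin n)) (v : Fin n) : ℕ :=
  Nat.card (G.neighborSet v)

/-- A tree is 3-star like if no vertex has degree `≥ 4`, and either there is at most
one vertex of degree `3`, or there are exactly two vertices of degree `3` and they
are joined by an edge. -/
def ThreeStarLike {n : ℕ} (G : SimpleGraph (Fin n)) : Prop :=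
  (∀ v, deg G v ≤ 3) ∧
    ({v | deg G v = 3}.Subsingleton ∨
      ∃ a b : Fin n, a ≠ b ∧ G.Adj a b ∧ {v | deg G v = 3} = {a, b})

/-- The graph `G′` on `[n+1]` obtained from a graph `G` on `[n]` by attaching the
new edge `{v, n+1}` at the vertex `v` of `G`. -/
def extendG {n : ℕ} (G : SimpleGraph (Fin n)) (v : Fin n) : SimpleGraph (Fin (n + 1)) :=
  SimpleGraph.fromRel (fun a b =>
    (∃ (ha : a ≠ Fin.last n) (hb : b ≠ Fin.last n),
      G.Adj (a.castPred ha) (b.castPred hb)) ∨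
    (a = Fin.castSucc v ∧ b = Fin.last n))

/-- The inclusion `S = K[x_1,…,x_n,y_1,…,y_n] → S′ = K[x_1,…,x_{n+1},y_1,…,y_{n+1}]`. -/
def liftS (K : Type) [Field K] (n : ℕ) :
    MvPolynomial (Fin n ⊕ Fin n) K →ₐ[K] MvPolynomial (Fin (n + 1) ⊕ Fin (n + 1)) K :=
  rename (Sum.map Fin.castSucc Fin.castSucc)

section Statement8Aux

variable {K : Type} [Field K] {n : ℕ} {G : SimpleGraph (Fin n)} {T : Set (Fin n)}

lemma xv_mem_PT {i : Fin n} (hi : i ∈ T) : xv K i ∈ PT K G T :=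
  Ideal.subset_span (Or.inl (Or.inl ⟨i, hi, rfl⟩))

lemma yv_mem_PT {i : Fin n} (hi : i ∈ T) : yv K i ∈ PT K G T :=
  Ideal.subset_span (Or.inl (Or.inr ⟨i, hi, rfl⟩))

lemma bin_mem_PT {i j : Fin n} (hi : i ∈ Tᶜ) (hj : j ∈ Tᶜ)
    (hr : (G.induce Tᶜ).Reachable ⟨i, hi⟩ ⟨j, hj⟩) :
    xv K i * yv K j - xv K j * yv K i ∈ PT K G T := by
  rcases lt_trichotomy i j with h | h | h
  · exact Ideal.subset_span (Or.inr ⟨i, j, hi, hj, h, hr, rfl⟩)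
  · subst h; simp
  · have hmem : xv K j * yv K i - xv K i * yv K j ∈ PT K G T :=
      Ideal.subset_span (Or.inr ⟨j, i, hj, hi, h, hr.symm, rfl⟩)
    have := (PT K G T).neg_mem hmem
    simpa using this

/-- For `i ∉ T`, the variable `x_i` is not in `P_T`. -/
lemma xv_not_mem_PT {i : Fin n} (hi : i ∉ T) : xv K i ∉ PT K G T := by
  classical
  set e : MvPolynomial (Fin n ⊕ Fin n) K →+* K :=
    eval₂Hom (RingHom.id K) (fun s => if s = Sum.inl i then (1 : K) else 0) with he
  have hker : PT K G T ≤ RingHom.ker e := by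
    rw [PT, Ideal.span_le]
    rintro f (hf | hf)
    · rcases hf with ⟨j, hjT, rfl⟩ | ⟨j, hjT, rfl⟩
      · have : j ≠ i := fun h => hi (h ▸ hjT)
        simp [RingHom.mem_ker, he, xv, this]
      · simp [RingHom.mem_ker, he, yv]
    · obtain ⟨a, b, _, _, _, _, rfl⟩ := hf
      simp [RingHom.mem_ker, he, xv, yv]
  intro hmem
  have : e (xv K i) = 0 := hker hmem
  simp [he, xv] at this

/-- Core argument: given a field `F` and a ring map `ρ` whose kernel is exactly
`P_T`, with `v ∈ T` an endpoint with unique neighbour `w`, the ideal `P_T` is not a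
minimal prime of the binomial edge ideal. -/
lemma not_endpoint_core (K : Type) [Field K] {n : ℕ} (T : Set (Fin n)) (v w : Fin n)
    (hv : v ∈ T) (hdeg : ∀ u, (lineG n).Adj v u → u = w)
    (F : Type) [Field F] (ρ : MvPolynomial (Fin n ⊕ Fin n) K →+* F)
    (hker : ∀ f, ρ f = 0 ↔ f ∈ PT K (lineG n) T)
    (hmin : PT K (lineG n) T ∈ (bei K (lineG n)).minimalPrimes) : False := by
  classical
  set P : Ideal (MvPolynomial (Fin n ⊕ Fin n) K) := PT K (lineG n) T with hPdef
  have hρ_zero : ∀ f, f ∈ P → ρ f = 0 := fun f hf => (hker f).mpr hf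
  have hρ_ne : ∀ i : Fin n, i ∉ T → ρ (xv K i) ≠ 0 := by
    intro i hi h0
    exact xv_not_mem_PT hi ((hker _).mp h0)
  -- the ratio `y_i / x_i` in F
  set lam : Fin n → F := fun i => (ρ (xv K i))⁻¹ * ρ (yv K i) with hlam
  set lam' : Fin n → F := fun i => lam (if i = v then w else i) with hlam'
  set A : Fin n → Polynomial F := fun i =>
    if i = v then Polynomial.X else Polynomial.C (ρ (xv K i)) with hA
  set Ψ : MvPolynomial (Fin n ⊕ Fin n) K →+* Polynomial F :=
    eval₂Hom ((Polynomial.C : F →+* Polynomial F).comp (ρ.comp MvPolynomial.C))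
      (fun s => Sum.elim (fun i => A i) (fun i => Polynomial.C (lam' i) * A i) s) with hΨ
  have hΨx : ∀ i, Ψ (xv K i) = A i := by
    intro i; rw [hΨ, xv, eval₂Hom_X']; rfl
  have hΨy : ∀ i, Ψ (yv K i) = Polynomial.C (lam' i) * A i := by
    intro i; rw [hΨ, yv, eval₂Hom_X']; rfl
  -- lam is constant on adjacent pairs outside T
  have hlam_eq : ∀ i j : Fin n, i ∉ T → j ∉ T → (lineG n).Adj i j → lam i = lam j := by
    intro i j hi hj hadj
    have hreach : ((lineG n).induce Tᶜ).Reachable ⟨i, hi⟩ ⟨j, hj⟩ :=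
      SimpleGraph.Adj.reachable hadj
    have hb := bin_mem_PT (K := K) hi hj hreach
    have h0 : ρ (xv K i) * ρ (yv K j) - ρ (xv K j) * ρ (yv K i) = 0 := by
      have := hρ_zero _ hb
      simpa [map_sub, map_mul] using this
    have hxi := hρ_ne i hi
    have hxj := hρ_ne j hj
    rw [hlam]
    field_simp
    linear_combination -h0
  -- bei is contained in the kernel of Ψ
  have hbeiKer : bei K (lineG n) ≤ RingHom.ker Ψ := by
    rw [bei, Ideal.span_le]
    rintro f ⟨i, j, hij, hadj, rfl⟩
    rw [SetLike.mem_coe, RingHom.mem_ker, map_sub, map_mul, map_mul, hΨx, hΨx, hΨy, hΨy]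
    have key : A i * (Polynomial.C (lam' j) * A j) - A j * (Polynomial.C (lam' i) * A i)
        = A i * A j * (Polynomial.C (lam' j) - Polynomial.C (lam' i)) := by ring
    rw [key]
    by_cases hiT : i ∈ T ∧ i ≠ v
    · have : A i = 0 := by
        rw [hA]; simp only [if_neg hiT.2]
        rw [hρ_zero _ (xv_mem_PT hiT.1), Polynomial.C_0]
      rw [this]; ring
    by_cases hjT : j ∈ T ∧ j ≠ v
    · have : A j = 0 := by
        rw [hA]; simp only [if_neg hjT.2]
        rw [hρ_zero _ (xv_mem_PT hjT.1), Polynomial.C_0]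
      rw [this]; ring
    -- both i and j are outside T \ {v}
    have hlam'_eq : lam' i = lam' j := by
      push_neg at hiT hjT
      by_cases hiv : i = v
      · have hjv : j ≠ v := by
          intro h; rw [hiv, h] at hij; exact lt_irrefl _ hij
        have hjw : j = w := hdeg j (hiv ▸ hadj)
        rw [hlam']
        simp [hiv, hjv, hjw]
      · by_cases hjv : j = v
        · have hiw : i = w := hdeg i (hjv ▸ hadj.symm)
          rw [hlam']
          simp [hiv, hjv, hiw]
        · have hi : i ∉ T := fun h => hiv (hiT h)
          have hj : j ∉ T := fun h => hjv (hjT h)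
          rw [hlam']
          simp only [if_neg hiv, if_neg hjv]
          exact hlam_eq i j hi hj hadj
    rw [hlam'_eq]; ring
  -- the kernel of Ψ is contained in P, via evaluation of the polynomial variable at 0
  have hKerP : RingHom.ker Ψ ≤ P := by
    have hcomp : (Polynomial.evalRingHom (0 : F)).comp Ψ = ρ := by
      apply MvPolynomial.ringHom_ext
      · intro r
        simp [hΨ]
      · intro s
        rcases s with i | i
        · rw [RingHom.comp_apply]
          change Polynomial.eval 0 (Ψ (xv K i)) = ρ (xv K i)
          rw [hΨx, hA]
          by_cases hiv : i = v
          · simp only [if_pos hiv, Polynomial.eval_X]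
            rw [hiv, hρ_zero _ (xv_mem_PT hv)]
          · simp [if_neg hiv]
        · rw [RingHom.comp_apply]
          change Polynomial.eval 0 (Ψ (yv K i)) = ρ (yv K i)
          rw [hΨy, hA]
          by_cases hiv : i = v
          · simp only [if_pos hiv, Polynomial.eval_mul, Polynomial.eval_C, Polynomial.eval_X,
              mul_zero]
            rw [hiv, hρ_zero _ (yv_mem_PT hv)]
          · simp only [if_neg hiv, Polynomial.eval_mul, Polynomial.eval_C]
            by_cases hiT : i ∈ T
            · rw [hρ_zero _ (xv_mem_PT hiT), hρ_zero _ (yv_mem_PT hiT), mul_zero]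
            · simp only [hlam', hlam, if_neg hiv]
              field_simp [hρ_ne i hiT]
    intro f hf
    rw [RingHom.mem_ker] at hf
    have hρf : ρ f = 0 := by
      rw [← hcomp, RingHom.comp_apply, hf, map_zero]
    exact (hker f).mp hρf
  -- minimality gives P ≤ ker Ψ, contradiction with x_v ∈ P but Ψ x_v = X ≠ 0
  have hPle : P ≤ RingHom.ker Ψ :=
    hmin.2 ⟨RingHom.ker_isPrime Ψ, hbeiKer⟩ hKerP
  have hxv : Ψ (xv K v) = 0 := hPle (xv_mem_PT hv)
  rw [hΨx, hA] at hxv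
  simp at hxv

set_option maxHeartbeats 1000000 in
set_option synthInstance.maxHeartbeats 1000000 in
/-- Key lemma: if `v ∈ T` has (at most) the single neighbour `w` in the line graph,
then `P_T` is not a minimal prime of the binomial edge ideal. -/
lemma not_endpoint_mem (K : Type) [Field K] {n : ℕ} (T : Set (Fin n)) (v w : Fin n)
    (hv : v ∈ T) (hdeg : ∀ u, (lineG n).Adj v u → u = w)
    (hmin : PT K (lineG n) T ∈ (bei K (lineG n)).minimalPrimes) : False := by
  have hP : (PT K (lineG n) T).IsPrime := hmin.1.1
  haveI := hP
  refine not_endpoint_core K T v w hv hdeg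
    (FractionRing (MvPolynomial (Fin n ⊕ Fin n) K ⧸ PT K (lineG n) T))
    ((algebraMap _ _).comp (Ideal.Quotient.mk (PT K (lineG n) T))) ?_ hmin
  intro f
  rw [RingHom.comp_apply, IsFractionRing.to_map_eq_zero_iff, Ideal.Quotient.eq_zero_iff_mem]

/-- In the line graph with a cut vertex `t` removed, walks cannot cross `t`. -/
lemma walk_lt {n : ℕ} {T : Set (Fin n)} {t : Fin n} (ht : t ∈ T) :
    ∀ {a b : {x // x ∈ Tᶜ}} (_ : ((lineG n).induce Tᶜ).Walk a b),
      (a : Fin n).val < t.val → (b : Fin n).val < t.val := by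
  intro a b p
  induction p with
  | nil => exact id
  | @cons u c b h p ih =>
    intro ha
    apply ih
    have hadj : (lineG n).Adj u.val c.val := h
    rw [lineG, SimpleGraph.fromRel_adj] at hadj
    have hct : (c : Fin n) ≠ t := by
      intro hc
      exact c.2 (hc ▸ ht)
    have hct' : ((c : Fin n) : ℕ) ≠ t.val := fun h => hct (Fin.ext h)
    rcases hadj.2 with h1 | h1 <;> omega

end Statement8Aux

/-- Let `L` be the line (path) on `[n]`, `I_L` its binomial edge
ideal, and `g = x_1 y_n − x_n y_1`.  For every nonempty `T ⊆ [n]` such that `P_T(L)`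
is a minimal prime of `I_L`, one has `g ∉ P_T(L)`. -/
theorem statement8 (K : Type) [Field K] (n : ℕ) (hn : 0 < n) (T : Set (Fin n))
    (hT : T ≠ ∅) (hmin : PT K (lineG n) T ∈ (bei K (lineG n)).minimalPrimes) :
    gElt K hn ∉ PT K (lineG n) T := by
  classical
  obtain ⟨t, ht⟩ : ∃ t, t ∈ T := Set.nonempty_iff_ne_empty.mpr hT
  set z : Fin n := ⟨0, hn⟩ with hz
  set e : Fin n := ⟨n - 1, by omega⟩ with he
  -- 0 ∉ T
  have h0 : z ∉ T := by
    intro h0T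
    refine not_endpoint_mem K T z ⟨1 % n, Nat.mod_lt _ hn⟩ h0T ?_ hmin
    intro u hu
    rw [lineG, SimpleGraph.fromRel_adj] at hu
    have hz0 : (z : ℕ) = 0 := rfl
    have hlt := u.isLt
    apply Fin.ext
    show (u : ℕ) = 1 % n
    rcases hu.2 with h1 | h1
    · have h2 : (1 : ℕ) < n := by omega
      rw [Nat.mod_eq_of_lt h2]
      omega
    · omega
  -- n-1 ∉ T
  have hl : e ∉ T := by
    intro heT
    refine not_endpoint_mem K T e ⟨n - 1 - 1, by omega⟩ heT ?_ hmin
    intro u hu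
    rw [lineG, SimpleGraph.fromRel_adj] at hu
    have he0 : (e : ℕ) = n - 1 := rfl
    have hlt := u.isLt
    apply Fin.ext
    show (u : ℕ) = n - 1 - 1
    rcases hu.2 with h1 | h1 <;> omega
  have h0c : z ∈ Tᶜ := h0
  have hlc : e ∈ Tᶜ := hl
  -- t is strictly between 0 and n-1
  have htz : t ≠ z := fun h => h0 (h ▸ ht)
  have hte : t ≠ e := fun h => hl (h ▸ ht)
  have ht0 : 0 < t.val := by
    rcases Nat.eq_zero_or_pos t.val with h | h
    · exact absurd (Fin.ext (by simp [hz, h])) htz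
    · exact h
  have htn : t.val < n - 1 := by
    have := t.isLt
    rcases lt_or_eq_of_le (Nat.le_sub_one_of_lt this) with h | h
    · exact h
    · exact absurd (Fin.ext (by simp [he, h])) hte
  -- 0 and n-1 are not connected in the induced graph
  have hsep : ¬ ((lineG n).induce Tᶜ).Reachable ⟨z, h0c⟩ ⟨e, hlc⟩ := by
    intro hr
    obtain ⟨p⟩ := hr
    have := walk_lt ht p (by simp [hz]; omega)
    simp only [he] at this
    omega
  -- the separating evaluation
  intro hg
  set ev : MvPolynomial (Fin n ⊕ Fin n) K →+* K :=
    eval₂Hom (RingHom.id K)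
      (Sum.elim
        (fun i => if h : ∃ hi : i ∈ Tᶜ, ((lineG n).induce Tᶜ).Reachable ⟨i, hi⟩ ⟨z, h0c⟩
          then (1 : K) else 0)
        (fun i => if h : ∃ hi : i ∈ Tᶜ, ((lineG n).induce Tᶜ).Reachable ⟨i, hi⟩ ⟨e, hlc⟩
          then (1 : K) else 0)) with hev
  have hevx : ∀ i : Fin n, ev (xv K i) =
      if h : ∃ hi : i ∈ Tᶜ, ((lineG n).induce Tᶜ).Reachable ⟨i, hi⟩ ⟨z, h0c⟩
        then (1 : K) else 0 := by
    intro i; simp [hev, xv]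
  have hevy : ∀ i : Fin n, ev (yv K i) =
      if h : ∃ hi : i ∈ Tᶜ, ((lineG n).induce Tᶜ).Reachable ⟨i, hi⟩ ⟨e, hlc⟩
        then (1 : K) else 0 := by
    intro i; simp [hev, yv]
  have hker : PT K (lineG n) T ≤ RingHom.ker ev := by
    rw [PT, Ideal.span_le]
    rintro f (hf | hf)
    · rcases hf with ⟨j, hjT, rfl⟩ | ⟨j, hjT, rfl⟩
      · rw [SetLike.mem_coe, RingHom.mem_ker, hevx]
        rw [dif_neg]
        rintro ⟨hj, -⟩
        exact hj hjT
      · rw [SetLike.mem_coe, RingHom.mem_ker, hevy]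
        rw [dif_neg]
        rintro ⟨hj, -⟩
        exact hj hjT
    · obtain ⟨a, b, ha, hb, hab, hr, rfl⟩ := hf
      rw [SetLike.mem_coe, RingHom.mem_ker, map_sub, map_mul, map_mul,
        hevx, hevx, hevy, hevy]
      have hx : (if h : ∃ hi : a ∈ Tᶜ, ((lineG n).induce Tᶜ).Reachable ⟨a, hi⟩ ⟨z, h0c⟩
            then (1 : K) else 0)
          = (if h : ∃ hi : b ∈ Tᶜ, ((lineG n).induce Tᶜ).Reachable ⟨b, hi⟩ ⟨z, h0c⟩
            then (1 : K) else 0) := by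
        by_cases hcase : ∃ hi : a ∈ Tᶜ, ((lineG n).induce Tᶜ).Reachable ⟨a, hi⟩ ⟨z, h0c⟩
        · obtain ⟨hi, hri⟩ := hcase
          rw [dif_pos ⟨hi, hri⟩, dif_pos ⟨hb, hr.symm.trans hri⟩]
        · rw [dif_neg hcase, dif_neg]
          rintro ⟨hj, hrj⟩
          exact hcase ⟨ha, hr.trans hrj⟩
      have hy : (if h : ∃ hi : a ∈ Tᶜ, ((lineG n).induce Tᶜ).Reachable ⟨a, hi⟩ ⟨e, hlc⟩
            then (1 : K) else 0)
          = (if h : ∃ hi : b ∈ Tᶜ, ((lineG n).induce Tᶜ).Reachable ⟨b, hi⟩ ⟨e, hlc⟩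
            then (1 : K) else 0) := by
        by_cases hcase : ∃ hi : a ∈ Tᶜ, ((lineG n).induce Tᶜ).Reachable ⟨a, hi⟩ ⟨e, hlc⟩
        · obtain ⟨hi, hri⟩ := hcase
          rw [dif_pos ⟨hi, hri⟩, dif_pos ⟨hb, hr.symm.trans hri⟩]
        · rw [dif_neg hcase, dif_neg]
          rintro ⟨hj, hrj⟩
          exact hcase ⟨ha, hr.trans hrj⟩
      rw [hx, hy]; ring
  have hg0 : ev (gElt K hn) = 0 := hker hg
  have : ev (gElt K hn) = 1 := by
    rw [gElt]
    have hxz : ev (xv K ⟨0, hn⟩) = 1 := by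
      rw [hevx, dif_pos ⟨h0c, SimpleGraph.Reachable.refl _⟩]
    have hye : ev (yv K ⟨n - 1, by omega⟩) = 1 := by
      rw [hevy, dif_pos ⟨hlc, SimpleGraph.Reachable.refl _⟩]
    have hxe : ev (xv K ⟨n - 1, by omega⟩) = 0 := by
      rw [hevx, dif_neg]
      rintro ⟨hi, hri⟩
      exact hsep hri.symm
    rw [map_sub, map_mul, map_mul, hxz, hye, hxe]
    ring
  rw [hg0] at this
  exact zero_ne_one this

end BEIPaper
end
end

section
/- Let L be the line (path) on [n], I_L its binomial edge ideal, g = x_1 y_n − x_n y_1, and J_G̃ the binomial edge ideal of the complete graph on [n]. Then I_L = (I_L : g) ∩ J_G̃. -/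
open MvPolynomial CategoryTheory Opposite

noncomputable section

namespace BEIPaper

section Aux
-- ------------- new stuff ------------------

/-- standard exponent vectors -/
def Std {n : ℕ} (d : (Fin n ⊕ Fin n) →₀ ℕ) : Prop :=
  ∀ i j : Fin n, (j : ℕ) = (i : ℕ) + 1 → (d (Sum.inl i) = 0 ∨ d (Sum.inr j) = 0)

/-- span of standard monomials -/
def Vsub (K : Type) [Field K] (n : ℕ) : Submodule K (MvPolynomial (Fin n ⊕ Fin n) K) where
  carrier := {f | ∀ d ∈ f.support, Std d}
  add_mem' := by
    intro a b ha hb d hd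
    rcases Finset.mem_union.mp (MvPolynomial.support_add hd) with h | h
    · exact ha d h
    · exact hb d h
  zero_mem' := by intro d hd; simp [MvPolynomial.support_zero] at hd
  smul_mem' := by intro c f hf d hd; exact hf d (MvPolynomial.support_smul hd)

def cmpT {n : ℕ} (T : Finset (Fin n)) (i : Fin n) : ℕ :=
  (T.filter fun t => t.val < i.val).card

def vtx {n : ℕ} : Fin n ⊕ Fin n → Fin n
  | Sum.inl i => i
  | Sum.inr i => i

def wT {n : ℕ} (T : Finset (Fin n)) : Fin n ⊕ Fin n → (((ℕ ⊕ ℕ) ⊕ Fin n) →₀ ℕ)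
  | Sum.inl i => Finsupp.single (Sum.inl (Sum.inl (cmpT T i))) 1 + Finsupp.single (Sum.inr i) 1
  | Sum.inr i => Finsupp.single (Sum.inl (Sum.inr (cmpT T i))) 1 + Finsupp.single (Sum.inr i) 1

def ΦT (K : Type) [Field K] {n : ℕ} (T : Finset (Fin n)) :
    MvPolynomial (Fin n ⊕ Fin n) K →ₐ[K] MvPolynomial ((ℕ ⊕ ℕ) ⊕ Fin n) K :=
  aeval (fun v => if vtx v ∈ T then 0 else monomial (wT T v) 1)

def ψT {n : ℕ} (T : Finset (Fin n)) (d : (Fin n ⊕ Fin n) →₀ ℕ) : ((ℕ ⊕ ℕ) ⊕ Fin n) →₀ ℕ :=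
  d.sum fun v k => k • wT T v

def avoidT {n : ℕ} (T : Finset (Fin n)) (d : (Fin n ⊕ Fin n) →₀ ℕ) : Prop :=
  ∀ v, vtx v ∈ T → d v = 0





variable {K : Type} [Field K] {n : ℕ}

lemma phi_X (T : Finset (Fin n)) (v : Fin n ⊕ Fin n) :
    ΦT K T (X v) = if vtx v ∈ T then 0 else monomial (wT T v) 1 := by
  simp [ΦT]

lemma monomial_prod {α : Type} (s : Finset α) (m : α → (((ℕ ⊕ ℕ) ⊕ Fin n) →₀ ℕ)) :
    (∏ v ∈ s, (monomial (m v) (1 : K))) = monomial (∑ v ∈ s, m v) 1 := by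
  classical
  induction s using Finset.induction_on with
  | empty => simp
  | insert _ _ hx ih =>
      rw [Finset.prod_insert hx, ih, Finset.sum_insert hx, monomial_mul, one_mul]

lemma phi_monomial_avoid (T : Finset (Fin n)) (d : (Fin n ⊕ Fin n) →₀ ℕ) (c : K)
    (h : avoidT T d) : ΦT K T (monomial d c) = monomial (ψT T d) c := by
  classical
  rw [ΦT, aeval_monomial]
  have : (d.prod fun v k => (if vtx v ∈ T then 0 else monomial (wT T v) (1 : K)) ^ k)
      = monomial (ψT T d) 1 := by
    rw [Finsupp.prod]
    have h1 : ∀ v ∈ d.support,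
        (if vtx v ∈ T then 0 else monomial (wT T v) (1 : K)) ^ (d v)
          = monomial ((d v) • wT T v) 1 := by
      intro v hv
      have : ¬ (vtx v ∈ T) := fun hvt => (Finsupp.mem_support_iff.mp hv) (h v hvt)
      rw [if_neg this, monomial_pow, one_pow]
    rw [Finset.prod_congr rfl h1, monomial_prod]
    rfl
  rw [this, MvPolynomial.algebraMap_eq, C_mul_monomial, mul_one]

lemma phi_monomial_not_avoid (T : Finset (Fin n)) (d : (Fin n ⊕ Fin n) →₀ ℕ) (c : K)
    (h : ¬ avoidT T d) : ΦT K T (monomial d c) = 0 := by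
  classical
  have h' : ∃ v, vtx v ∈ T ∧ d v ≠ 0 := by
    by_contra hc
    push_neg at hc
    exact h fun v hv => hc v hv
  obtain ⟨v, hvT, hdv⟩ := h'
  rw [ΦT, aeval_monomial]
  have hvs : v ∈ d.support := Finsupp.mem_support_iff.mpr hdv
  rw [Finsupp.prod, Finset.prod_eq_zero hvs]
  · ring
  · rw [if_pos hvT, zero_pow hdv]

lemma psi_apply (T : Finset (Fin n)) (d : (Fin n ⊕ Fin n) →₀ ℕ) (coord : (ℕ ⊕ ℕ) ⊕ Fin n) :
    ψT T d coord = ∑ v : Fin n ⊕ Fin n, d v * (wT T v coord) := by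
  classical
  rw [ψT, Finsupp.sum_apply, Finsupp.sum]
  rw [Finset.sum_subset (Finset.subset_univ d.support)]
  · simp
  · intro v _ hv
    simp [Finsupp.notMem_support_iff.mp hv]

lemma psi_inr (T : Finset (Fin n)) (d : (Fin n ⊕ Fin n) →₀ ℕ) (i : Fin n) :
    ψT T d (Sum.inr i) = d (Sum.inl i) + d (Sum.inr i) := by
  classical
  rw [psi_apply, Fintype.sum_sum_type]
  have h1 : ∀ p : Fin n, (wT T (Sum.inl p)) (Sum.inr i) = if p = i then 1 else 0 := by
    intro p; simp [wT, Finsupp.single_apply]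
  have h2 : ∀ p : Fin n, (wT T (Sum.inr p)) (Sum.inr i) = if p = i then 1 else 0 := by
    intro p; simp [wT, Finsupp.single_apply]
  simp only [h1, h2, mul_ite, mul_one, mul_zero]
  rw [Finset.sum_ite_eq' Finset.univ i (fun p => d (Sum.inl p)),
      Finset.sum_ite_eq' Finset.univ i (fun p => d (Sum.inr p))]
  simp

lemma psi_s (T : Finset (Fin n)) (d : (Fin n ⊕ Fin n) →₀ ℕ) (c : ℕ) :
    ψT T d (Sum.inl (Sum.inl c))
      = ∑ i ∈ Finset.univ.filter (fun i : Fin n => cmpT T i = c), d (Sum.inl i) := by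
  classical
  rw [psi_apply, Fintype.sum_sum_type]
  have h1 : ∀ p : Fin n, (wT T (Sum.inl p)) (Sum.inl (Sum.inl c))
      = if cmpT T p = c then 1 else 0 := by
    intro p; simp [wT, Finsupp.single_apply]
  have h2 : ∀ p : Fin n, (wT T (Sum.inr p)) (Sum.inl (Sum.inl c)) = 0 := by
    intro p; simp [wT, Finsupp.single_apply]
  simp only [h1, h2, mul_ite, mul_one, mul_zero, Finset.sum_const_zero, add_zero]
  rw [Finset.sum_filter]

lemma cmp_succ (T : Finset (Fin n)) (i j : Fin n) (h : (j : ℕ) = (i : ℕ) + 1)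
    (hi : i ∉ T) : cmpT T i = cmpT T j := by
  unfold cmpT
  congr 1
  apply Finset.filter_congr
  intro t ht
  have : t ≠ i := fun he => hi (he ▸ ht)
  have : (t : ℕ) ≠ (i : ℕ) := fun hv => this (Fin.ext hv)
  omega

lemma ker_line (T : Finset (Fin n)) : ∀ f ∈ bei K (lineG n), ΦT K T f = 0 := by
  intro f hf
  have : bei K (lineG n) ≤ RingHom.ker (ΦT K T (n := n)).toRingHom := by
    rw [bei, Ideal.span_le]
    rintro f ⟨i, j, hij, hadj, rfl⟩
    have hadj' : i ≠ j ∧ ((j : ℕ) = (i : ℕ) + 1 ∨ (i : ℕ) = (j : ℕ) + 1) := by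
      simpa [lineG, SimpleGraph.fromRel_adj] using hadj
    have hlt : (i : ℕ) < (j : ℕ) := hij
    have hsucc : (j : ℕ) = (i : ℕ) + 1 := by omega
    simp only [SetLike.mem_coe, RingHom.mem_ker, AlgHom.toRingHom_eq_coe,
      RingHom.coe_coe, map_sub, map_mul]
    rw [xv, yv, xv, yv, phi_X, phi_X, phi_X, phi_X]
    by_cases hiT : i ∈ T
    · simp [vtx, hiT]
    · by_cases hjT : j ∈ T
      · simp [vtx, hjT]
      · have hc : cmpT T i = cmpT T j := cmp_succ T i j hsucc hiT
        rw [if_neg (show vtx (Sum.inl i) ∉ T from hiT), if_neg (show vtx (Sum.inr j) ∉ T from hjT),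
          if_neg (show vtx (Sum.inl j) ∉ T from hjT), if_neg (show vtx (Sum.inr i) ∉ T from hiT)]
        simp only [monomial_mul, mul_one]
        rw [sub_eq_zero]
        have he : wT T (Sum.inl i) + wT T (Sum.inr j)
            = wT T (Sum.inl j) + wT T (Sum.inr i) := by
          simp only [wT, hc]; abel
        rw [he]
  exact this hf

lemma ker_top : ∀ f ∈ bei K (⊤ : SimpleGraph (Fin n)), ΦT K (∅ : Finset (Fin n)) f = 0 := by
  intro f hf
  have : bei K (⊤ : SimpleGraph (Fin n)) ≤ RingHom.ker (ΦT K (∅ : Finset (Fin n))).toRingHom := by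
    rw [bei, Ideal.span_le]
    rintro f ⟨i, j, hij, hadj, rfl⟩
    have hc : cmpT (∅ : Finset (Fin n)) i = cmpT ∅ j := by simp [cmpT]
    simp only [SetLike.mem_coe, RingHom.mem_ker, AlgHom.toRingHom_eq_coe,
      RingHom.coe_coe, map_sub, map_mul]
    rw [xv, yv, xv, yv, phi_X, phi_X, phi_X, phi_X]
    simp only [Finset.notMem_empty, if_false, monomial_mul, mul_one]
    rw [sub_eq_zero]
    have he : wT (∅ : Finset (Fin n)) (Sum.inl i) + wT ∅ (Sum.inr j)
        = wT ∅ (Sum.inl j) + wT ∅ (Sum.inr i) := by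
      simp only [wT, hc]; abel
    rw [he]
  exact this hf

lemma monomial_w_inl (T : Finset (Fin n)) (i : Fin n) :
    (monomial (wT T (Sum.inl i)) (1 : K))
      = X (Sum.inl (Sum.inl (cmpT T i))) * X (Sum.inr i) := by
  rw [show (X (Sum.inl (Sum.inl (cmpT T i))) : MvPolynomial ((ℕ ⊕ ℕ) ⊕ Fin n) K) = monomial (Finsupp.single (Sum.inl (Sum.inl (cmpT T i))) 1) 1 from rfl, show (X (Sum.inr i) : MvPolynomial ((ℕ ⊕ ℕ) ⊕ Fin n) K) = monomial (Finsupp.single (Sum.inr i : (ℕ ⊕ ℕ) ⊕ Fin n) 1) 1 from rfl, monomial_mul, one_mul]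
  rfl

lemma monomial_w_inr (T : Finset (Fin n)) (i : Fin n) :
    (monomial (wT T (Sum.inr i)) (1 : K))
      = X (Sum.inl (Sum.inr (cmpT T i))) * X (Sum.inr i) := by
  rw [show (X (Sum.inl (Sum.inr (cmpT T i))) : MvPolynomial ((ℕ ⊕ ℕ) ⊕ Fin n) K) = monomial (Finsupp.single (Sum.inl (Sum.inr (cmpT T i))) 1) 1 from rfl, show (X (Sum.inr i) : MvPolynomial ((ℕ ⊕ ℕ) ⊕ Fin n) K) = monomial (Finsupp.single (Sum.inr i : (ℕ ⊕ ℕ) ⊕ Fin n) 1) 1 from rfl, monomial_mul, one_mul]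
  rfl

lemma phi_g_ne_zero (hn : 0 < n) (T : Finset (Fin n))
    (hT : ∀ t ∈ T, 0 < (t : ℕ) ∧ (t : ℕ) < n - 1) (hne : T.Nonempty) :
    ΦT K T (gElt K hn) ≠ 0 := by
  classical
  have hn3 : 3 ≤ n := by
    obtain ⟨t, ht⟩ := hne
    have := hT t ht
    omega
  set i0 : Fin n := ⟨0, hn⟩ with hi0
  set i1 : Fin n := ⟨n - 1, by omega⟩ with hi1
  have h0T : i0 ∉ T := fun h => by have := hT i0 h; simp [hi0] at this
  have h1T : i1 ∉ T := fun h => by have := hT i1 h; simp only [hi1, Fin.val_mk] at this; omega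
  have hc0 : cmpT T i0 = 0 := by
    unfold cmpT
    rw [Finset.card_eq_zero, Finset.filter_eq_empty_iff]
    intro t _; simp [hi0]
  have hc1 : cmpT T i1 = T.card := by
    unfold cmpT
    congr 1
    rw [Finset.filter_eq_self]
    intro t ht
    have := hT t ht
    simp only [hi1, Fin.val_mk]
    omega
  have hcne : T.card ≠ 0 := by
    rw [Finset.card_ne_zero]
    exact hne
  set pt : ((ℕ ⊕ ℕ) ⊕ Fin n) → K := fun z => match z with
    | Sum.inl (Sum.inl c) => if c = 0 then 1 else 0
    | _ => 1 with hpt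
  intro hzero
  have : eval pt (ΦT K T (gElt K hn)) = 1 := by
    rw [gElt, map_sub, map_mul, map_mul]
    rw [xv, yv, xv, yv, phi_X, phi_X, phi_X, phi_X]
    rw [if_neg (show vtx (Sum.inl i0) ∉ T from h0T), if_neg (show vtx (Sum.inr i1) ∉ T from h1T),
      if_neg (show vtx (Sum.inl i1) ∉ T from h1T), if_neg (show vtx (Sum.inr i0) ∉ T from h0T)]
    rw [monomial_w_inl, monomial_w_inr, monomial_w_inl, monomial_w_inr]
    simp only [map_sub, map_mul, eval_X, hc0, hc1]
    simp [hpt, hcne, show cmpT T ⟨0, hn⟩ = 0 from hc0,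
      show cmpT T ⟨n - 1, by omega⟩ = T.card from hc1]
  rw [hzero] at this
  simp at this

def μw {n : ℕ} (d : (Fin n ⊕ Fin n) →₀ ℕ) : ℕ :=
  ∑ i : Fin n, (n - 1 - (i : ℕ)) * d (Sum.inl i)

lemma mu_add (d e : (Fin n ⊕ Fin n) →₀ ℕ) : μw (d + e) = μw d + μw e := by
  unfold μw
  rw [← Finset.sum_add_distrib]
  apply Finset.sum_congr rfl
  intro i _
  simp [mul_add]

lemma mu_single_inl (i : Fin n) :
    μw (Finsupp.single (Sum.inl i : Fin n ⊕ Fin n) 1) = n - 1 - (i : ℕ) := by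
  unfold μw
  rw [Finset.sum_eq_single i]
  · simp
  · intro b _ hb
    have : (Sum.inl i : Fin n ⊕ Fin n) ≠ Sum.inl b := by simp [hb.symm]
    rw [Finsupp.single_apply, if_neg this, mul_zero]
  · simp

lemma mu_single_inr (i : Fin n) :
    μw (Finsupp.single (Sum.inr i : Fin n ⊕ Fin n) 1) = 0 := by
  unfold μw
  apply Finset.sum_eq_zero
  intro b _
  rw [Finsupp.single_apply, if_neg (by simp), mul_zero]

lemma delta_mem (i j : Fin n) (h : (j : ℕ) = (i : ℕ) + 1) :
    xv K i * yv K j - xv K j * yv K i ∈ bei K (lineG n) := by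
  apply Ideal.subset_span
  refine ⟨i, j, ?_, ?_, rfl⟩
  · exact Fin.lt_def.mpr (by omega)
  · rw [lineG, SimpleGraph.fromRel_adj]
    exact ⟨Fin.ne_of_val_ne (by omega), Or.inl h⟩

def Wsub (K : Type) [Field K] (n : ℕ) : Submodule K (MvPolynomial (Fin n ⊕ Fin n) K) :=
  Submodule.restrictScalars K (bei K (lineG n)) ⊔ Vsub K n

lemma monomial_mem_W : ∀ (N : ℕ) (d : (Fin n ⊕ Fin n) →₀ ℕ), μw d = N →
    monomial d (1 : K) ∈ Wsub K n := by
  intro N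
  induction N using Nat.strong_induction_on with
  | _ N ih =>
    classical
    intro d hd
    by_cases hs : Std d
    · apply Submodule.mem_sup_right
      intro d' hd'
      rw [support_monomial, if_neg (one_ne_zero)] at hd'
      rw [Finset.mem_singleton.mp hd']
      exact hs
    · have hex : ∃ i j : Fin n, (j : ℕ) = (i : ℕ) + 1 ∧
          d (Sum.inl i) ≠ 0 ∧ d (Sum.inr j) ≠ 0 := by
        by_contra hc
        push_neg at hc
        apply hs
        intro i j hij
        by_cases h : d (Sum.inl i) = 0
        · exact Or.inl h
        · exact Or.inr (hc i j hij h)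
      obtain ⟨i, j, hij, hdi, hdj⟩ := hex
      set e := d - Finsupp.single (Sum.inl i) 1 - Finsupp.single (Sum.inr j) 1 with he
      have hd_eq : d = e + Finsupp.single (Sum.inl i) 1 + Finsupp.single (Sum.inr j) 1 := by
        rw [he]
        ext v
        simp only [Finsupp.add_apply, Finsupp.tsub_apply, Finsupp.single_apply]
        by_cases h1 : (Sum.inl i : Fin n ⊕ Fin n) = v
        · rw [if_pos h1, if_neg (by rw [← h1]; simp)]
          have : d v ≠ 0 := by rw [← h1]; exact hdi
          omega
        · rw [if_neg h1]
          by_cases h2 : (Sum.inr j : Fin n ⊕ Fin n) = v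
          · rw [if_pos h2]
            have : d v ≠ 0 := by rw [← h2]; exact hdj
            omega
          · rw [if_neg h2]
            omega
      set d' := e + Finsupp.single (Sum.inl j) 1 + Finsupp.single (Sum.inr i) 1 with hd'
      have hX : ∀ a : Fin n ⊕ Fin n, (X a : MvPolynomial (Fin n ⊕ Fin n) K)
          = monomial (Finsupp.single a 1) 1 := fun a => rfl
      have key2 : monomial d (1 : K) - monomial d' 1
          = (xv K i * yv K j - xv K j * yv K i) * monomial e 1 := by
        rw [xv, yv, xv, yv, hX, hX, hX, hX, monomial_mul, monomial_mul, sub_mul,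
          monomial_mul, monomial_mul]
        congr 1
        · congr 1
          · rw [hd_eq]; abel
          · norm_num
        · congr 1
          · rw [hd']; abel
          · norm_num
      have hmu : μw d' < μw d := by
        have hjlt : (j : ℕ) < n := j.isLt
        rw [hd_eq, hd', mu_add, mu_add, mu_add, mu_add, mu_single_inl, mu_single_inl,
          mu_single_inr, mu_single_inr]
        omega
      have h1 : monomial d' (1 : K) ∈ Wsub K n := ih (μw d') (hd ▸ hmu) d' rfl
      have h2 : (xv K i * yv K j - xv K j * yv K i) * monomial e 1 ∈ bei K (lineG n) :=
        Ideal.mul_mem_right _ _ (delta_mem (K := K) i j hij)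
      have key : monomial d (1 : K)
          = (xv K i * yv K j - xv K j * yv K i) * monomial e 1 + monomial d' 1 := by
        rw [← key2]; ring
      rw [key]
      exact Submodule.add_mem _ (Submodule.mem_sup_left h2) h1

lemma mem_W (f : MvPolynomial (Fin n ⊕ Fin n) K) : f ∈ Wsub K n := by
  nth_rewrite 1 [as_sum f]
  apply Submodule.sum_mem
  intro d _
  have hsm : monomial d (coeff d f) = (coeff d f) • monomial d (1 : K) := by
    rw [smul_monomial, smul_eq_mul, mul_one]
  rw [hsm]
  exact Submodule.smul_mem _ _ (monomial_mem_W (μw d) d rfl)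

lemma cmp_eq_noT (T : Finset (Fin n)) (p q : Fin n) (hpq : (p : ℕ) ≤ (q : ℕ))
    (hc : cmpT T p = cmpT T q) :
    ∀ r ∈ T, ¬((p : ℕ) ≤ (r : ℕ) ∧ (r : ℕ) < (q : ℕ)) := by
  intro r hr hcon
  have hsub : T.filter (fun t => t.val < p.val) ⊆ T.filter (fun t => t.val < q.val) := by
    intro t ht
    rw [Finset.mem_filter] at ht ⊢
    exact ⟨ht.1, by omega⟩
  have heq : T.filter (fun t => t.val < p.val) = T.filter (fun t => t.val < q.val) :=
    Finset.eq_of_subset_of_card_le hsub (le_of_eq hc.symm)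
  have hrq : r ∈ T.filter (fun t => t.val < q.val) :=
    Finset.mem_filter.mpr ⟨hr, hcon.2⟩
  rw [← heq, Finset.mem_filter] at hrq
  omega

lemma chain (d : (Fin n ⊕ Fin n) →₀ ℕ) (hstd : Std d) :
    ∀ (k : ℕ) (p q : Fin n), (q : ℕ) = (p : ℕ) + k → 0 < k →
    (∀ r : Fin n, (p : ℕ) < (r : ℕ) → (r : ℕ) < (q : ℕ) →
      0 < d (Sum.inl r) + d (Sum.inr r)) →
    0 < d (Sum.inl q) + d (Sum.inr q) →
    0 < d (Sum.inl p) →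
    d (Sum.inr q) = 0 ∧ 0 < d (Sum.inl q) := by
  intro k
  induction k with
  | zero => omega
  | succ k ih =>
      intro p q hq _ hmid hq2 hp
      by_cases hk : k = 0
      · subst hk
        have hb : d (Sum.inl p) = 0 ∨ d (Sum.inr q) = 0 := hstd p q (by omega)
        have hbq : d (Sum.inr q) = 0 := by
          rcases hb with h | h
          · omega
          · exact h
        exact ⟨hbq, by omega⟩
      · have hr1 : (p : ℕ) + 1 < n := by
          have := q.isLt
          omega
        set r : Fin n := ⟨(p : ℕ) + 1, hr1⟩ with hrdef
        have hbr : d (Sum.inr r) = 0 := by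
          rcases hstd p r (by simp [hrdef]) with h | h
          · omega
          · exact h
        have hΓr : 0 < d (Sum.inl r) + d (Sum.inr r) := by
          apply hmid r (by simp [hrdef]) (by simp [hrdef]; omega)
        have har : 0 < d (Sum.inl r) := by omega
        exact ih r q (by simp [hrdef]; omega) (by omega)
          (fun r' h1 h2 => hmid r' (by simp [hrdef] at h1; omega) h2) hq2 har

lemma fiber_aux (T : Finset (Fin n)) (d d₀ : (Fin n ⊕ Fin n) →₀ ℕ)
    (hstd : Std d)
    (hav : avoidT T d) (hav0 : avoidT T d₀)
    (hγ : ∀ i : Fin n, d (Sum.inl i) + d (Sum.inr i) = d₀ (Sum.inl i) + d₀ (Sum.inr i))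
    (hTfull : ∀ i : Fin n, 0 < (i : ℕ) → (i : ℕ) < n - 1 → i ∉ T →
      0 < d₀ (Sum.inl i) + d₀ (Sum.inr i))
    (hA : ∀ c : ℕ, ∑ i ∈ Finset.univ.filter (fun i : Fin n => cmpT T i = c), d (Sum.inl i)
        = ∑ i ∈ Finset.univ.filter (fun i : Fin n => cmpT T i = c), d₀ (Sum.inl i))
    (q : Fin n)
    (hqmax : ∀ i : Fin n, (q : ℕ) < (i : ℕ) → d (Sum.inl i) = d₀ (Sum.inl i))
    (hqlt : d (Sum.inl q) < d₀ (Sum.inl q)) : False := by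
  classical
  have hqT : q ∉ T := by
    intro hq
    have := hav0 (Sum.inl q) hq
    omega
  set c := cmpT T q with hc
  have hbound : ∀ i ∈ Finset.univ.filter (fun i : Fin n => cmpT T i = c),
      d (Sum.inl i) ≤ d₀ (Sum.inl i) := by
    intro i hi
    rw [Finset.mem_filter] at hi
    rcases lt_trichotomy (i : ℕ) (q : ℕ) with hlt | heq | hgt
    · by_cases hiT : i ∈ T
      · rw [hav (Sum.inl i) hiT, hav0 (Sum.inl i) hiT]
      · -- show d (inl i) = 0
        by_contra hcon
        push_neg at hcon
        have hdi : 0 < d (Sum.inl i) := by omega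
        have hnoT := cmp_eq_noT T i q (by omega) (by rw [hi.2])
        have hmid : ∀ r : Fin n, (i : ℕ) < (r : ℕ) → (r : ℕ) < (q : ℕ) →
            0 < d (Sum.inl r) + d (Sum.inr r) := by
          intro r h1 h2
          rw [hγ r]
          apply hTfull r (by omega) (by have := q.isLt; omega)
          intro hrT
          exact hnoT r hrT ⟨by omega, h2⟩
        have hΓq : 0 < d (Sum.inl q) + d (Sum.inr q) := by
          rw [hγ q]
          omega
        obtain ⟨hbq, _⟩ := chain d hstd ((q : ℕ) - (i : ℕ)) i q (by omega) (by omega)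
          hmid hΓq hdi
        have : d (Sum.inl q) = d₀ (Sum.inl q) + d₀ (Sum.inr q) := by
          have := hγ q
          omega
        omega
    · have : i = q := Fin.ext heq
      rw [this]
      omega
    · rw [hqmax i hgt]
  have hq_mem : q ∈ Finset.univ.filter (fun i : Fin n => cmpT T i = c) := by
    rw [Finset.mem_filter]
    exact ⟨Finset.mem_univ q, rfl⟩
  have hlt : ∑ i ∈ Finset.univ.filter (fun i : Fin n => cmpT T i = c), d (Sum.inl i)
      < ∑ i ∈ Finset.univ.filter (fun i : Fin n => cmpT T i = c), d₀ (Sum.inl i) :=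
    Finset.sum_lt_sum hbound ⟨q, hq_mem, hqlt⟩
  rw [hA c] at hlt
  omega

lemma fiber_unique (T : Finset (Fin n)) (d d₀ : (Fin n ⊕ Fin n) →₀ ℕ)
    (hstd : Std d) (hstd0 : Std d₀)
    (hav : avoidT T d) (hav0 : avoidT T d₀)
    (hγ : ∀ i : Fin n, d (Sum.inl i) + d (Sum.inr i) = d₀ (Sum.inl i) + d₀ (Sum.inr i))
    (hTfull : ∀ i : Fin n, 0 < (i : ℕ) → (i : ℕ) < n - 1 → i ∉ T →
      0 < d₀ (Sum.inl i) + d₀ (Sum.inr i))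
    (hA : ∀ c : ℕ, ∑ i ∈ Finset.univ.filter (fun i : Fin n => cmpT T i = c), d (Sum.inl i)
        = ∑ i ∈ Finset.univ.filter (fun i : Fin n => cmpT T i = c), d₀ (Sum.inl i)) :
    d = d₀ := by
  classical
  have haeq : ∀ i : Fin n, d (Sum.inl i) = d₀ (Sum.inl i) := by
    by_contra hcon
    push_neg at hcon
    obtain ⟨i0, hi0⟩ := hcon
    set Q := Finset.univ.filter (fun i : Fin n => d (Sum.inl i) ≠ d₀ (Sum.inl i)) with hQ
    have hQne : Q.Nonempty := ⟨i0, by rw [hQ, Finset.mem_filter]; exact ⟨Finset.mem_univ _, hi0⟩⟩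
    set q := Q.max' hQne with hq
    have hqmem : q ∈ Q := Q.max'_mem hQne
    have hqne : d (Sum.inl q) ≠ d₀ (Sum.inl q) := by
      rw [hQ] at hqmem
      exact (Finset.mem_filter.mp hqmem).2
    have hqmax : ∀ i : Fin n, (q : ℕ) < (i : ℕ) → d (Sum.inl i) = d₀ (Sum.inl i) := by
      intro i hi
      by_contra hne
      have him : i ∈ Q := by rw [hQ, Finset.mem_filter]; exact ⟨Finset.mem_univ _, hne⟩
      have := Q.le_max' i him
      rw [← hq] at this
      exact absurd (Fin.lt_def.mpr hi) (not_lt.mpr this)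
    rcases lt_or_gt_of_ne hqne with hlt | hgt
    · exact fiber_aux T d d₀ hstd hav hav0 hγ hTfull hA q hqmax hlt
    · refine fiber_aux T d₀ d hstd0 hav0 hav (fun i => (hγ i).symm) ?_
        (fun c => (hA c).symm) q (fun i hi => (hqmax i hi).symm) hgt
      intro i h1 h2 hiT
      rw [hγ i]
      exact hTfull i h1 h2 hiT
  ext v
  cases v with
  | inl i => exact haeq i
  | inr i =>
      have h1 := hγ i
      have h2 := haeq i
      omega

lemma indep (v : MvPolynomial (Fin n ⊕ Fin n) K) (hv : v ∈ Vsub K n)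
    (h : ∀ T : Finset (Fin n), (∀ t ∈ T, 0 < (t : ℕ) ∧ (t : ℕ) < n - 1) → ΦT K T v = 0) :
    v = 0 := by
  classical
  ext d₀
  rw [coeff_zero]
  by_cases hd₀ : d₀ ∈ v.support
  · have hstd0 : Std d₀ := hv d₀ hd₀
    set T : Finset (Fin n) := Finset.univ.filter
      (fun i : Fin n => 0 < (i : ℕ) ∧ (i : ℕ) < n - 1 ∧ d₀ (Sum.inl i) + d₀ (Sum.inr i) = 0)
      with hT
    have hTint : ∀ t ∈ T, 0 < (t : ℕ) ∧ (t : ℕ) < n - 1 := by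
      intro t ht
      rw [hT, Finset.mem_filter] at ht
      exact ⟨ht.2.1, ht.2.2.1⟩
    have hav0 : avoidT T d₀ := by
      intro w hw
      rw [hT, Finset.mem_filter] at hw
      cases w with
      | inl i => simp only [vtx] at hw; omega
      | inr i => simp only [vtx] at hw; omega
    have hTfull : ∀ i : Fin n, 0 < (i : ℕ) → (i : ℕ) < n - 1 → i ∉ T →
        0 < d₀ (Sum.inl i) + d₀ (Sum.inr i) := by
      intro i h1 h2 hiT
      by_contra hcon
      apply hiT
      rw [hT, Finset.mem_filter]
      exact ⟨Finset.mem_univ _, h1, h2, by omega⟩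
    have hΦ := h T hTint
    have hΦ2 : ∑ d ∈ v.support, ΦT K T (monomial d (coeff d v)) = 0 := by
      rw [← map_sum, ← as_sum]
      exact hΦ
    have hco : ∑ d ∈ v.support, coeff (ψT T d₀) (ΦT K T (monomial d (coeff d v))) = 0 := by
      rw [← coeff_sum, hΦ2, coeff_zero]
    have hterm : ∀ d ∈ v.support, d ≠ d₀ →
        coeff (ψT T d₀) (ΦT K T (monomial d (coeff d v))) = 0 := by
      intro d hd hne
      by_cases hav : avoidT T d
      · rw [phi_monomial_avoid T d _ hav, coeff_monomial]
        rw [if_neg]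
        intro hpsi
        apply hne
        apply fiber_unique T d d₀ (hv d hd) hstd0 hav hav0
        · intro i
          have h1 : ψT T d (Sum.inr i) = ψT T d₀ (Sum.inr i) := by rw [hpsi]
          rw [psi_inr, psi_inr] at h1
          exact h1
        · exact hTfull
        · intro c
          have h1 : ψT T d (Sum.inl (Sum.inl c)) = ψT T d₀ (Sum.inl (Sum.inl c)) := by
            rw [hpsi]
          rw [psi_s, psi_s] at h1
          exact h1
      · rw [phi_monomial_not_avoid T d _ hav, coeff_zero]
    rw [Finset.sum_eq_single d₀ hterm (fun hnd => absurd hd₀ hnd)] at hco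
    rw [phi_monomial_avoid T d₀ _ hav0, coeff_monomial, if_pos rfl] at hco
    exact hco
  · exact MvPolynomial.notMem_support_iff.mp hd₀

end Aux

/-- Let `L` be the line (path) on `[n]`, `I_L` its binomial edge
ideal, `g = x_1 y_n − x_n y_1`, and `J_G̃` the binomial edge ideal of the complete
graph on `[n]`.  Then `I_L = (I_L : g) ∩ J_G̃`. -/
theorem statement9 (K : Type) [Field K] (n : ℕ) (hn : 0 < n) :
    bei K (lineG n) =
      (bei K (lineG n)).colon (Ideal.span {gElt K hn}) ⊓
        bei K (⊤ : SimpleGraph (Fin n)) := by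
  apply le_antisymm
  · apply le_inf
    · intro f hf
      rw [Submodule.mem_colon]
      intro p hp
      rw [smul_eq_mul]
      exact Ideal.mul_mem_right p _ hf
    · rw [bei, bei]
      apply Ideal.span_mono
      rintro f ⟨i, j, hij, _, rfl⟩
      exact ⟨i, j, hij, by rw [SimpleGraph.top_adj]; exact ne_of_lt hij, rfl⟩
  · intro f hf
    obtain ⟨hfc, hfJ⟩ := Submodule.mem_inf.mp hf
    have hfg : f * gElt K hn ∈ bei K (lineG n) := by
      have := Submodule.mem_colon.mp hfc (gElt K hn)
        (Ideal.subset_span (Set.mem_singleton _))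
      rwa [smul_eq_mul] at this
    obtain ⟨h, hh, v, hvV, hsum⟩ := Submodule.mem_sup.mp (mem_W f)
    have hhI : h ∈ bei K (lineG n) := hh
    have hvz : v = 0 := by
      apply indep v hvV
      intro T hTint
      have hΦf : ΦT K T f = ΦT K T v := by
        rw [← hsum, map_add, ker_line T h hhI, zero_add]
      rcases Finset.eq_empty_or_nonempty T with hTe | hTne
      · subst hTe
        rw [← hΦf]
        exact ker_top f hfJ
      · have h1 : ΦT K T (f * gElt K hn) = 0 := ker_line T _ hfg
        rw [map_mul] at h1
        rcases mul_eq_zero.mp h1 with h2 | h2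
        · rw [← hΦf]; exact h2
        · exact absurd h2 (phi_g_ne_zero hn T hTint hTne)
    rw [← hsum, hvz, add_zero]
    exact hhI


end BEIPaper
end
end

section
/- Let L be the line (path) on [n], I_L its binomial edge ideal, g = x_1 y_n − x_n y_1, and J_G̃ the binomial edge ideal of the complete graph on [n]. Then I_L : g = I_L : J_G̃. -/
open MvPolynomial CategoryTheory Opposite

noncomputable section

namespace BEIPaper

open scoped Classical

section Core
variable {n : ℕ}

abbrev D (n : ℕ) := (Fin n ⊕ Fin n) →₀ ℕ

/-- number of x's at position `p` (0-indexed), ℕ-indexed. -/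
def av (μ : D n) (p : ℕ) : ℕ := if h : p < n then μ (Sum.inl ⟨p, h⟩) else 0
def bv (μ : D n) (p : ℕ) : ℕ := if h : p < n then μ (Sum.inr ⟨p, h⟩) else 0
def cv (μ : D n) (p : ℕ) : ℕ := av μ p + bv μ p
/-- number of x's at positions `≤ q`. -/
def Av (μ : D n) (q : ℕ) : ℕ := ∑ p ∈ Finset.range (q+1), av μ p
/-- total number of x's. -/
def txv (μ : D n) : ℕ := ∑ p ∈ Finset.range n, av μ p

lemma av_eq_zero_of_ge (μ : D n) {p : ℕ} (h : n ≤ p) : av μ p = 0 := by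
  simp [av, Nat.not_lt.mpr h]

lemma cv_eq_zero_of_ge (μ : D n) {p : ℕ} (h : n ≤ p) : cv μ p = 0 := by
  simp [cv, av, bv, Nat.not_lt.mpr h]

lemma av_le_cv (μ : D n) (p : ℕ) : av μ p ≤ cv μ p := Nat.le_add_right _ _

lemma Av_mono (μ : D n) {q q' : ℕ} (h : q ≤ q') : Av μ q ≤ Av μ q' :=
  Finset.sum_le_sum_of_subset (Finset.range_subset_range.2 (by omega))

lemma Av_eq_txv_of_ge (μ : D n) {q : ℕ} (h : n ≤ q + 1) : Av μ q = txv μ := by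
  unfold Av txv
  rw [← Finset.sum_subset (Finset.range_subset_range.2 h)]
  intro x _ hx
  exact av_eq_zero_of_ge μ (by simpa using hx)

lemma Av_le_txv (μ : D n) (q : ℕ) : Av μ q ≤ txv μ := by
  rcases le_or_gt n (q+1) with h | h
  · exact (Av_eq_txv_of_ge μ h).le
  · unfold Av txv
    exact Finset.sum_le_sum_of_subset (Finset.range_subset_range.2 (by omega))

lemma Av_succ (μ : D n) (q : ℕ) : Av μ (q+1) = Av μ q + av μ (q+1) :=
  Finset.sum_range_succ _ _

/-- target for the greedy fill at position `p`: the number of x's up to the first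
gap `≥ p`, or the total number of x's if there is no gap `≥ p`. -/
def Gv (μ : D n) (p : ℕ) : ℕ :=
  if h : ∃ q, p ≤ q ∧ q < n ∧ cv μ q = 0 then Av μ (Nat.find h) else txv μ

lemma Gv_le_txv (μ : D n) (p : ℕ) : Gv μ p ≤ txv μ := by
  unfold Gv; split
  · exact Av_le_txv μ _
  · exact le_refl _

lemma Av_le_Gv (μ : D n) (p : ℕ) : Av μ p ≤ Gv μ p := by
  unfold Gv; split
  case isTrue h => exact Av_mono μ (Nat.find_spec h).1
  case isFalse h => exact Av_le_txv μ p

lemma Gv_mono (μ : D n) {p p' : ℕ} (h : p ≤ p') : Gv μ p ≤ Gv μ p' := by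
  unfold Gv
  split
  case isTrue h1 =>
    split
    case isTrue h2 =>
      refine Av_mono μ (Nat.find_min' h1 ?_)
      obtain ⟨h3, h4, h5⟩ := Nat.find_spec h2
      exact ⟨le_trans h h3, h4, h5⟩
    case isFalse h2 => exact Av_le_txv μ _
  case isFalse h1 =>
    split
    case isTrue h2 =>
      exact absurd ⟨Nat.find h2, le_trans h (Nat.find_spec h2).1, (Nat.find_spec h2).2⟩ h1
    case isFalse h2 => exact le_refl _

lemma Gv_eq_of_ne_gap (μ : D n) {p : ℕ} (h : cv μ p ≠ 0) : Gv μ p = Gv μ (p+1) := by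
  unfold Gv
  have hiff : (∃ q, p ≤ q ∧ q < n ∧ cv μ q = 0) ↔ (∃ q, p + 1 ≤ q ∧ q < n ∧ cv μ q = 0) := by
    constructor
    · rintro ⟨q, h1, h2, h3⟩
      refine ⟨q, ?_, h2, h3⟩
      rcases eq_or_lt_of_le h1 with h' | h'
      · exact absurd (h' ▸ h3) h
      · omega
    · rintro ⟨q, h1, h2, h3⟩; exact ⟨q, by omega, h2, h3⟩
  split
  case isTrue h1 =>
    rw [dif_pos (hiff.mp h1)]
    congr 1
    refine le_antisymm (Nat.find_min' h1 ?_) (Nat.find_min' (hiff.mp h1) ?_)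
    · obtain ⟨h3, h4, h5⟩ := Nat.find_spec (hiff.mp h1); exact ⟨by omega, h4, h5⟩
    · obtain ⟨h3, h4, h5⟩ := Nat.find_spec h1
      have hp : p ≤ Nat.find h1 := (Nat.find_spec h1).1
      rcases eq_or_lt_of_le hp with h' | h'
      · exact absurd (h' ▸ h5) h
      · omega
  case isFalse h1 => rw [dif_neg (fun hc => h1 (hiff.mpr hc))]

def pre (μ : D n) : ℕ → ℕ
  | 0 => min (cv μ 0) (Gv μ 0)
  | p+1 => pre μ p + min (cv μ (p+1)) (Gv μ (p+1) - pre μ p)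

def nav (μ : D n) : ℕ → ℕ
  | 0 => min (cv μ 0) (Gv μ 0)
  | p+1 => min (cv μ (p+1)) (Gv μ (p+1) - pre μ p)

lemma pre_succ (μ : D n) (p : ℕ) : pre μ (p+1) = pre μ p + nav μ (p+1) := rfl
lemma pre_zero (μ : D n) : pre μ 0 = nav μ 0 := rfl
lemma nav_zero (μ : D n) : nav μ 0 = min (cv μ 0) (Gv μ 0) := rfl
lemma nav_succ (μ : D n) (p : ℕ) : nav μ (p+1) = min (cv μ (p+1)) (Gv μ (p+1) - pre μ p) := rfl

lemma nav_le_cv (μ : D n) (p : ℕ) : nav μ p ≤ cv μ p := by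
  cases p <;> exact min_le_left _ _

lemma pre_le_Gv (μ : D n) (p : ℕ) : pre μ p ≤ Gv μ p := by
  induction p with
  | zero => exact min_le_right _ _
  | succ p ih =>
    have h2 : pre μ p ≤ Gv μ (p+1) := le_trans ih (Gv_mono μ (by omega))
    rw [pre_succ]
    calc pre μ p + nav μ (p+1) ≤ pre μ p + (Gv μ (p+1) - pre μ p) :=
          Nat.add_le_add_left (min_le_right _ _) _
    _ = Gv μ (p+1) := Nat.add_sub_cancel' h2

lemma pre_mono (μ : D n) {p p' : ℕ} (h : p ≤ p') : pre μ p ≤ pre μ p' := by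
  induction p' with
  | zero => simp [Nat.le_zero.mp h]
  | succ p' ih =>
    rcases Nat.lt_or_ge p (p'+1) with h' | h'
    · exact le_trans (ih (by omega)) (Nat.le_add_right _ _)
    · have : p = p' + 1 := by omega
      simp [this]

lemma Av_le_pre (μ : D n) (p : ℕ) : Av μ p ≤ pre μ p := by
  induction p with
  | zero =>
    have h1 : Av μ 0 = av μ 0 := by simp [Av]
    rw [h1]
    exact le_min (av_le_cv μ 0) (h1 ▸ Av_le_Gv μ 0)
  | succ p ih =>
    rw [Av_succ, pre_succ]
    rcases le_total (cv μ (p+1)) (Gv μ (p+1) - pre μ p) with h | h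
    · rw [nav, min_eq_left h]
      exact Nat.add_le_add ih (av_le_cv μ _)
    · rw [nav, min_eq_right h]
      have h2 : pre μ p ≤ Gv μ (p+1) := le_trans (pre_le_Gv μ p) (Gv_mono μ (by omega))
      rw [Nat.add_sub_cancel' h2]
      exact le_trans (Av_succ μ p ▸ Av_le_Gv μ (p+1)) (le_refl _)

lemma pre_at_gap (μ : D n) {q : ℕ} (h : cv μ q = 0) : pre μ q = Av μ q := by
  refine le_antisymm ?_ (Av_le_pre μ q)
  refine le_trans (pre_le_Gv μ q) ?_
  unfold Gv
  split
  case isTrue h1 =>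
    have : Nat.find h1 = q := by
      rcases Nat.lt_or_ge q n with hq | hq
      · exact le_antisymm (Nat.find_min' h1 ⟨le_refl q, hq, h⟩) (Nat.find_spec h1).1
      · exact absurd (Nat.find_spec h1) (by intro ⟨a1, a2, _⟩; omega)
    rw [this]
  case isFalse h1 =>
    rcases Nat.lt_or_ge q n with hq | hq
    · exact absurd ⟨q, le_refl q, hq, h⟩ h1
    · rw [Av_eq_txv_of_ge μ (by omega)]

lemma pre_eq_txv (μ : D n) {p : ℕ} (h : n ≤ p + 1) : pre μ p = txv μ :=
  le_antisymm (le_trans (pre_le_Gv μ p) (Gv_le_txv μ p))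
    (le_trans (Av_eq_txv_of_ge μ h).ge (Av_le_pre μ p))

end Core

section Core2
variable {n : ℕ}

/-- normal form: x's pushed to the left within each block. -/
def NF (μ : D n) : D n :=
  Finsupp.equivFunOnFinite.symm
    (Sum.elim (fun i : Fin n => nav μ i) (fun i : Fin n => cv μ i - nav μ i))

lemma Av_zero (μ : D n) : Av μ 0 = av μ 0 := by simp [Av]

lemma nav_eq_zero_of_ge (μ : D n) {p : ℕ} (hn : 0 < n) (h : n ≤ p) : nav μ p = 0 := by
  have h2 : cv μ p = 0 := cv_eq_zero_of_ge μ h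
  cases p with
  | zero => omega
  | succ k => exact Nat.le_zero.mp (h2 ▸ nav_le_cv μ (k+1))

lemma av_NF (hn : 0 < n) (μ : D n) (p : ℕ) : av (NF μ) p = nav μ p := by
  unfold av NF
  split
  case isTrue h => simp
  case isFalse h => exact (nav_eq_zero_of_ge μ hn (by omega)).symm

lemma bv_NF (hn : 0 < n) (μ : D n) (p : ℕ) : bv (NF μ) p = cv μ p - nav μ p := by
  unfold bv NF
  split
  case isTrue h => simp
  case isFalse h =>
    rw [cv_eq_zero_of_ge μ (by omega), nav_eq_zero_of_ge μ hn (by omega)]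

lemma cv_NF (hn : 0 < n) (μ : D n) (p : ℕ) : cv (NF μ) p = cv μ p := by
  rw [cv, av_NF hn, bv_NF hn, Nat.add_sub_cancel' (nav_le_cv μ p)]

lemma Av_NF (hn : 0 < n) (μ : D n) (q : ℕ) : Av (NF μ) q = pre μ q := by
  induction q with
  | zero => rw [Av_zero, av_NF hn, pre_zero]
  | succ q ih => rw [Av_succ, ih, av_NF hn, pre_succ]

lemma txv_NF (hn : 0 < n) (μ : D n) : txv (NF μ) = txv μ := by
  rw [← Av_eq_txv_of_ge (NF μ) (show n ≤ (n-1) + 1 by omega), Av_NF hn,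
    pre_eq_txv μ (by omega)]

def leftNormal (μ : D n) : Prop := ∀ p : ℕ, av μ (p+1) ≠ 0 → bv μ p = 0

lemma NF_leftNormal (hn : 0 < n) (μ : D n) : leftNormal (NF μ) := by
  intro p hne
  rw [av_NF hn] at hne
  rw [bv_NF hn]
  suffices h : cv μ p ≤ nav μ p by omega
  by_cases hc : cv μ p = 0
  · rw [hc]; exact Nat.zero_le _
  have hG : Gv μ p = Gv μ (p+1) := Gv_eq_of_ne_gap μ hc
  have hlt : pre μ p < Gv μ (p+1) := by
    have : Gv μ (p+1) - pre μ p ≠ 0 := by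
      intro hz
      apply hne
      cases p with
      | zero => rw [nav_succ, hz, Nat.min_zero]
      | succ k => rw [nav_succ, hz, Nat.min_zero]
    omega
  cases p with
  | zero =>
    rcases le_total (cv μ 0) (Gv μ 0) with h | h
    · rw [nav_zero, min_eq_left h]
    · exfalso
      have : pre μ 0 = Gv μ 0 := by rw [pre_zero, nav_zero, min_eq_right h]
      omega
  | succ k =>
    rcases le_total (cv μ (k+1)) (Gv μ (k+1) - pre μ k) with h | h
    · rw [nav_succ, min_eq_left h]
    · exfalso
      have h2 : pre μ k ≤ Gv μ (k+1) := le_trans (pre_le_Gv μ k) (Gv_mono μ (by omega))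
      have : pre μ (k+1) = Gv μ (k+1) := by
        rw [pre_succ, nav_succ, min_eq_right h, Nat.add_sub_cancel' h2]
      omega

lemma chain_s11 {μ : D n} (hLN : leftNormal μ) {p r : ℕ} (hpr : p < r) (hb : bv μ p ≠ 0)
    (hmid : ∀ t, p < t → t < r → cv μ t ≠ 0) : av μ r = 0 := by
  revert hpr hmid
  induction r using Nat.strong_induction_on with
  | _ r ih =>
    intro hpr hmid
    rcases Nat.lt_or_ge (p+1) r with h' | h'
    · by_cases hbt : bv μ (r-1) = 0
      · exfalso
        have hav : av μ (r-1) = 0 :=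
          ih (r-1) (by omega) (by omega) (fun t ht1 ht2 => hmid t ht1 (by omega))
        have : cv μ (r-1) = 0 := by rw [cv, hav, hbt]
        exact hmid (r-1) (by omega) (by omega) this
      · by_contra hav
        apply hbt
        have := hLN (r-1) (by rw [show r - 1 + 1 = r by omega]; exact hav)
        exact this
    · have hr : r = p + 1 := by omega
      subst hr
      by_contra hav
      exact hb (hLN p hav)

lemma Gv_eq_Av_of_bv {μ : D n} (hLN : leftNormal μ) {p : ℕ} (hb : bv μ p ≠ 0) :
    Gv μ p = Av μ p := by
  have hzero : ∀ t, p < t → t < n → cv μ t ≠ 0 ∨ t ∈ ({0}:Set ℕ) → True := fun _ _ _ _ => trivial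
  unfold Gv
  split
  case isTrue h1 =>
    obtain ⟨hfp, hfn, hfc⟩ := Nat.find_spec h1
    have hsum : ∀ t ∈ Finset.Ico (p+1) (Nat.find h1 + 1), av μ t = 0 := by
      intro t ht
      rw [Finset.mem_Ico] at ht
      rcases eq_or_lt_of_le (Nat.lt_succ_iff.mp ht.2) with he | hlt
      · rw [he]
        have : av μ (Nat.find h1) ≤ cv μ (Nat.find h1) := av_le_cv μ _
        omega
      · refine chain_s11 hLN (by omega) hb (fun s hs1 hs2 => ?_)
        have := Nat.find_min h1 (m := s) (by omega)
        intro hcs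
        exact this ⟨by omega, by omega, hcs⟩
    have : Av μ (Nat.find h1) = Av μ p := by
      unfold Av
      rw [Finset.range_eq_Ico,
        ← Finset.sum_Ico_consecutive (fun i => av μ i) (by omega : 0 ≤ p+1)
          (by omega : p+1 ≤ Nat.find h1 + 1), Finset.sum_eq_zero hsum, add_zero, Finset.range_eq_Ico]
    rw [this]
  case isFalse h1 =>
    push_neg at h1
    rcases Nat.lt_or_ge p n with hpn | hpn
    · have hsum : ∀ t ∈ Finset.Ico (p+1) n, av μ t = 0 := by
        intro t ht
        rw [Finset.mem_Ico] at ht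
        refine chain_s11 hLN (by omega) hb (fun s hs1 hs2 => h1 s (by omega) (by omega))
      unfold txv Av
      rw [Finset.range_eq_Ico,
        ← Finset.sum_Ico_consecutive (fun i => av μ i) (by omega : 0 ≤ p+1)
          (by omega : p+1 ≤ n), Finset.sum_eq_zero hsum, add_zero, Finset.range_eq_Ico]
    · exact (Av_eq_txv_of_ge μ (by omega)).symm

lemma NF_fix {μ : D n} (hn : 0 < n) (hLN : leftNormal μ) : NF μ = μ := by
  have hpre : ∀ p, nav μ p = av μ p ∧ pre μ p = Av μ p := by
    intro p
    induction p with
    | zero =>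
      have hnav0 : nav μ 0 = av μ 0 := by
        by_cases hb : bv μ 0 = 0
        · have hc : cv μ 0 = av μ 0 := by rw [cv, hb, add_zero]
          rw [nav_zero, hc, min_eq_left (by rw [← Av_zero]; exact Av_le_Gv μ 0)]
        · rw [nav_zero, Gv_eq_Av_of_bv hLN hb, Av_zero, min_eq_right (av_le_cv μ 0)]
      exact ⟨hnav0, by rw [pre_zero, hnav0, Av_zero]⟩
    | succ p ih =>
      have hnav : nav μ (p+1) = av μ (p+1) := by
        by_cases hb : bv μ (p+1) = 0
        · have hc : cv μ (p+1) = av μ (p+1) := by rw [cv, hb, add_zero]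
          have hge : av μ (p+1) ≤ Gv μ (p+1) - pre μ p := by
            have h1 : Av μ (p+1) ≤ Gv μ (p+1) := Av_le_Gv μ (p+1)
            rw [Av_succ] at h1
            rw [ih.2]
            omega
          rw [nav_succ, hc, min_eq_left hge]
        · have hG : Gv μ (p+1) = Av μ (p+1) := Gv_eq_Av_of_bv hLN hb
          rw [nav_succ, hG, Av_succ, ih.2, Nat.add_sub_cancel_left,
            min_eq_right (av_le_cv μ (p+1))]
      exact ⟨hnav, by rw [pre_succ, hnav, ih.2, ← Av_succ]⟩
  ext a
  cases a with
  | inl i =>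
    have h1 : NF μ (Sum.inl i) = av (NF μ) i := by rw [av, dif_pos i.isLt, Fin.eta]
    have h2 : μ (Sum.inl i) = av μ i := by rw [av, dif_pos i.isLt, Fin.eta]
    rw [h1, h2, av_NF hn, (hpre i).1]
  | inr i =>
    have h1 : NF μ (Sum.inr i) = bv (NF μ) i := by rw [bv, dif_pos i.isLt, Fin.eta]
    have h2 : μ (Sum.inr i) = bv μ i := by rw [bv, dif_pos i.isLt, Fin.eta]
    rw [h1, h2, bv_NF hn, (hpre i).1, cv, Nat.add_sub_cancel_left]

lemma NF_congr {μ ν : D n} (hc : ∀ p, cv μ p = cv ν p) (htx : txv μ = txv ν)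
    (hA : ∀ q, cv μ q = 0 → Av μ q = Av ν q) : NF μ = NF ν := by
  have hG : ∀ p, Gv μ p = Gv ν p := by
    intro p
    unfold Gv
    have hiff : (∃ q, p ≤ q ∧ q < n ∧ cv μ q = 0) ↔ (∃ q, p ≤ q ∧ q < n ∧ cv ν q = 0) := by
      constructor <;> (rintro ⟨q, h1, h2, h3⟩; exact ⟨q, h1, h2, by rw [hc q] at * <;> omega⟩)
    split
    case isTrue h1 =>
      rw [dif_pos (hiff.mp h1)]
      have hfind : Nat.find h1 = Nat.find (hiff.mp h1) := by
        refine le_antisymm (Nat.find_min' h1 ?_) (Nat.find_min' (hiff.mp h1) ?_)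
        · obtain ⟨a1, a2, a3⟩ := Nat.find_spec (hiff.mp h1)
          exact ⟨a1, a2, by rw [hc _]; exact a3⟩
        · obtain ⟨a1, a2, a3⟩ := Nat.find_spec h1
          exact ⟨a1, a2, by rw [← hc _]; exact a3⟩
      rw [← hfind]
      exact hA _ (Nat.find_spec h1).2.2
    case isFalse h1 =>
      rw [dif_neg (fun hcon => h1 (hiff.mpr hcon))]
      exact htx
  have hpre : ∀ p, nav μ p = nav ν p ∧ pre μ p = pre ν p := by
    intro p
    induction p with
    | zero =>
      have : nav μ 0 = nav ν 0 := by rw [nav_zero, nav_zero, hc 0, hG 0]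
      exact ⟨this, by rw [pre_zero, pre_zero, this]⟩
    | succ p ih =>
      have : nav μ (p+1) = nav ν (p+1) := by
        rw [nav_succ, nav_succ, hc (p+1), hG (p+1), ih.2]
      exact ⟨this, by rw [pre_succ, pre_succ, this, ih.2]⟩
  unfold NF
  congr 1
  funext x
  cases x with
  | inl i => simp [(hpre i).1]
  | inr i => simp [(hpre i).1, hc i]

end Core2

section Core3
variable {n : ℕ}

/-- exponent of the monomial `x_i y_j`. -/
def Ex (i j : Fin n) : D n :=
  Finsupp.single (Sum.inl i) 1 + Finsupp.single (Sum.inr j) 1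

lemma av_add (μ ν : D n) (p : ℕ) : av (μ + ν) p = av μ p + av ν p := by
  unfold av; split <;> simp

lemma bv_add (μ ν : D n) (p : ℕ) : bv (μ + ν) p = bv μ p + bv ν p := by
  unfold bv; split <;> simp

lemma cv_add (μ ν : D n) (p : ℕ) : cv (μ + ν) p = cv μ p + cv ν p := by
  unfold cv; rw [av_add, bv_add]; ring

lemma Av_add (μ ν : D n) (q : ℕ) : Av (μ + ν) q = Av μ q + Av ν q := by
  unfold Av; rw [← Finset.sum_add_distrib]; exact Finset.sum_congr rfl fun p _ => av_add μ ν p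

lemma txv_add (μ ν : D n) : txv (μ + ν) = txv μ + txv ν := by
  unfold txv; rw [← Finset.sum_add_distrib]; exact Finset.sum_congr rfl fun p _ => av_add μ ν p

lemma av_single_inl (i : Fin n) (k : ℕ) (p : ℕ) :
    av (Finsupp.single (Sum.inl i) k : D n) p = if p = (i:ℕ) then k else 0 := by
  unfold av
  split
  case isTrue h =>
    rw [Finsupp.single_apply]
    congr 1
    simp [Sum.inl.injEq, Fin.ext_iff, eq_comm]
  case isFalse h =>
    rw [if_neg (by intro he; exact h (he ▸ i.isLt))]

lemma av_single_inr (j : Fin n) (k : ℕ) (p : ℕ) :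
    av (Finsupp.single (Sum.inr j) k : D n) p = 0 := by
  unfold av; split <;> simp

lemma bv_single_inr (j : Fin n) (k : ℕ) (p : ℕ) :
    bv (Finsupp.single (Sum.inr j) k : D n) p = if p = (j:ℕ) then k else 0 := by
  unfold bv
  split
  case isTrue h =>
    rw [Finsupp.single_apply]
    congr 1
    simp [Sum.inr.injEq, Fin.ext_iff, eq_comm]
  case isFalse h =>
    rw [if_neg (by intro he; exact h (he ▸ j.isLt))]

lemma bv_single_inl (i : Fin n) (k : ℕ) (p : ℕ) :
    bv (Finsupp.single (Sum.inl i) k : D n) p = 0 := by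
  unfold bv; split <;> simp

lemma av_Ex (i j : Fin n) (p : ℕ) : av (Ex i j) p = if p = (i:ℕ) then 1 else 0 := by
  rw [Ex, av_add, av_single_inl, av_single_inr, add_zero]

lemma bv_Ex (i j : Fin n) (p : ℕ) : bv (Ex i j) p = if p = (j:ℕ) then 1 else 0 := by
  rw [Ex, bv_add, bv_single_inl, bv_single_inr, zero_add]

lemma cv_Ex (i j : Fin n) (p : ℕ) :
    cv (Ex i j) p = (if p = (i:ℕ) then 1 else 0) + (if p = (j:ℕ) then 1 else 0) := by
  rw [cv, av_Ex, bv_Ex]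

lemma Av_Ex (i j : Fin n) (q : ℕ) : Av (Ex i j) q = if (i:ℕ) ≤ q then 1 else 0 := by
  unfold Av
  rw [Finset.sum_congr rfl (fun p _ => av_Ex i j p), Finset.sum_ite_eq' (Finset.range (q+1))]
  simp [Nat.lt_succ_iff]

lemma txv_Ex (i j : Fin n) : txv (Ex i j) = 1 := by
  unfold txv
  rw [Finset.sum_congr rfl (fun p _ => av_Ex i j p), Finset.sum_ite_eq' (Finset.range n)]
  simp [i.isLt]

/-- `μ` has a gap strictly between positions `i` and `j`. -/
def splitP (μ : D n) (i j : ℕ) : Prop := ∃ q, i < q ∧ q < j ∧ cv μ q = 0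

lemma NF_add_Ex_eq {μ : D n} {i j : Fin n} (hij : i < j) (hns : ¬ splitP μ i j) :
    NF (μ + Ex i j) = NF (μ + Ex j i) := by
  apply NF_congr
  · intro p; rw [cv_add, cv_add, cv_Ex, cv_Ex]; ring
  · rw [txv_add, txv_add, txv_Ex, txv_Ex]
  · intro q hq
    rw [cv_add, cv_Ex] at hq
    have hqi : q ≠ (i:ℕ) := by intro he; simp [he] at hq
    have hqj : q ≠ (j:ℕ) := by intro he; simp [he] at hq
    have hcq : cv μ q = 0 := by
      rw [if_neg hqi, if_neg hqj] at hq; omega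
    rw [Av_add, Av_add, Av_Ex, Av_Ex]
    have hfij : (i:ℕ) < (j:ℕ) := hij
    by_cases h1 : (i:ℕ) ≤ q
    · by_cases h2 : (j:ℕ) ≤ q
      · rw [if_pos h1, if_pos h2]
      · exact absurd ⟨q, by omega, by omega, hcq⟩ hns
    · rw [if_neg h1, if_neg (by omega)]

end Core3

section Core4
variable {n : ℕ}

def lowIdx (hn : 0 < n) : Fin n := ⟨0, hn⟩
def highIdx (hn : 0 < n) : Fin n := ⟨n-1, by omega⟩
def E1 (hn : 0 < n) : D n := Ex (lowIdx hn) (highIdx hn)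
def E2 (hn : 0 < n) : D n := Ex (highIdx hn) (lowIdx hn)

@[simp] lemma lowIdx_coe (hn : 0 < n) : ((lowIdx hn) : ℕ) = 0 := rfl
@[simp] lemma highIdx_coe (hn : 0 < n) : ((highIdx hn) : ℕ) = n - 1 := rfl

lemma Av_NF_gap (hn : 0 < n) (μ : D n) {q : ℕ} (h : cv μ q = 0) :
    Av (NF μ) q = Av μ q := by rw [Av_NF hn, pre_at_gap μ h]

lemma NF_add_E1_inj (hn : 0 < n) {u u' : D n} (hu : leftNormal u) (hu' : leftNormal u')
    (h : NF (u + E1 hn) = NF (u' + E1 hn)) : u = u' := by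
  have hc : ∀ p, cv u p = cv u' p := by
    intro p
    have h2 := congrArg (fun ν => cv ν p) h
    rw [cv_NF hn, cv_NF hn, cv_add, cv_add] at h2
    omega
  have htx : txv u = txv u' := by
    have h2 := congrArg txv h
    rw [txv_NF hn, txv_NF hn, txv_add, txv_add] at h2
    omega
  have hA : ∀ q, cv u q = 0 → Av u q = Av u' q := by
    intro q hq
    by_cases hq0 : q = 0
    · subst hq0
      have e1 := av_le_cv u 0
      have e2 := av_le_cv u' 0
      have e3 := hc 0
      rw [Av_zero, Av_zero]
      omega
    by_cases hqn : n - 1 ≤ q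
    · rw [Av_eq_txv_of_ge u (by omega), Av_eq_txv_of_ge u' (by omega)]
      exact htx
    · have hgap : cv (u + E1 hn) q = 0 := by
        rw [E1, cv_add, cv_Ex, if_neg (by simpa using hq0), if_neg (by simp; omega)]
        omega
      have hgap' : cv (u' + E1 hn) q = 0 := by
        rw [E1, cv_add, cv_Ex, if_neg (by simpa using hq0), if_neg (by simp; omega)]
        rw [← hc q]
        omega
      have h2 : Av (u + E1 hn) q = Av (u' + E1 hn) q := by
        rw [← Av_NF_gap hn _ hgap, ← Av_NF_gap hn _ hgap', h]
      rw [E1, Av_add, Av_add, Av_Ex, lowIdx_coe, if_pos (Nat.zero_le q)] at h2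
      omega
  have := NF_congr hc htx hA
  rw [NF_fix hn hu, NF_fix hn hu'] at this
  exact this

lemma NF_partner (hn : 0 < n) {u w : D n} (h : NF (w + E2 hn) = NF (u + E1 hn)) :
    (∀ p, cv w p = cv u p) ∧ txv w = txv u ∧
      ∀ q, 0 < q → q < n - 1 → cv u q = 0 → Av w q = Av u q + 1 := by
  have hc : ∀ p, cv w p = cv u p := by
    intro p
    have h2 := congrArg (fun ν => cv ν p) h
    rw [cv_NF hn, cv_NF hn, cv_add, cv_add, E1, E2, cv_Ex, cv_Ex] at h2
    omega
  have htx : txv w = txv u := by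
    have h2 := congrArg txv h
    rw [txv_NF hn, txv_NF hn, txv_add, txv_add, E1, E2, txv_Ex, txv_Ex] at h2
    omega
  refine ⟨hc, htx, fun q hq0 hqn hq => ?_⟩
  have hgap : cv (u + E1 hn) q = 0 := by
    rw [E1, cv_add, cv_Ex, if_neg (by simp; omega), if_neg (by simp; omega)]
    omega
  have hgap' : cv (w + E2 hn) q = 0 := by
    rw [E2, cv_add, cv_Ex, if_neg (by simp; omega), if_neg (by simp; omega)]
    rw [hc q]
    omega
  have h2 : Av (w + E2 hn) q = Av (u + E1 hn) q := by
    rw [← Av_NF_gap hn _ hgap, ← Av_NF_gap hn _ hgap', h]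
  rw [E1, E2, Av_add, Av_add, Av_Ex, Av_Ex, lowIdx_coe, highIdx_coe,
    if_pos (Nat.zero_le q), if_neg (by omega)] at h2
  omega

end Core4


section Poly
variable (K : Type) [Field K] {n : ℕ}

/-- the normal form projection, as a linear map. -/
def Phi : MvPolynomial (Fin n ⊕ Fin n) K →ₗ[K] MvPolynomial (Fin n ⊕ Fin n) K where
  toFun f := ∑ d ∈ f.support, monomial (NF d) (coeff d f)
  map_add' f g := by
    have key : ∀ (h : MvPolynomial (Fin n ⊕ Fin n) K) (s : Finset (D n)), h.support ⊆ s →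
        ∑ d ∈ h.support, monomial (NF d) (coeff d h)
          = ∑ d ∈ s, monomial (NF d) (coeff d h) := by
      intro h s hs
      refine Finset.sum_subset hs (fun d _ hd => ?_)
      rw [MvPolynomial.notMem_support_iff.mp hd, map_zero]
    set s := ((f+g).support ∪ f.support) ∪ g.support with hs
    show ∑ d ∈ (f+g).support, monomial (NF d) (coeff d (f+g))
        = (∑ d ∈ f.support, monomial (NF d) (coeff d f))
          + ∑ d ∈ g.support, monomial (NF d) (coeff d g)
    rw [key (f+g) s (Finset.Subset.trans Finset.subset_union_left Finset.subset_union_left),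
      key f s (Finset.Subset.trans Finset.subset_union_right Finset.subset_union_left),
      key g s Finset.subset_union_right,
      ← Finset.sum_add_distrib]
    exact Finset.sum_congr rfl fun d _ => by rw [coeff_add, map_add]
  map_smul' c f := by
    have key : ∀ (h : MvPolynomial (Fin n ⊕ Fin n) K) (s : Finset (D n)), h.support ⊆ s →
        ∑ d ∈ h.support, monomial (NF d) (coeff d h)
          = ∑ d ∈ s, monomial (NF d) (coeff d h) := by
      intro h s hs
      refine Finset.sum_subset hs (fun d _ hd => ?_)
      rw [MvPolynomial.notMem_support_iff.mp hd, map_zero]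
    simp only [RingHom.id_apply]
    show ∑ d ∈ (c • f).support, monomial (NF d) (coeff d (c • f))
        = c • ∑ d ∈ f.support, monomial (NF d) (coeff d f)
    rw [key (c • f) f.support (MvPolynomial.support_smul), Finset.smul_sum]
    refine Finset.sum_congr rfl fun d _ => ?_
    rw [coeff_smul, smul_eq_mul, ← map_smul, smul_eq_mul]

lemma Phi_apply (f : MvPolynomial (Fin n ⊕ Fin n) K) :
    Phi K f = ∑ d ∈ f.support, monomial (NF d) (coeff d f) := by
  simp only [Phi, LinearMap.coe_mk, AddHom.coe_mk]

lemma Phi_monomial (d : D n) (k : K) : Phi K (monomial d k) = monomial (NF d) k := by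
  rw [Phi_apply]
  by_cases hk : k = 0
  · simp [hk]
  · rw [support_monomial, if_neg hk, Finset.sum_singleton, coeff_monomial, if_pos rfl]

lemma xv_mul_yv (i j : Fin n) : xv K i * yv K j = monomial (Ex i j) 1 := by
  rw [xv, yv, X, X, monomial_mul, one_mul, Ex]

lemma line_gen_mem {i j : Fin n} (hij : (j:ℕ) = (i:ℕ) + 1) :
    (monomial (Ex i j) 1 - monomial (Ex j i) 1 : MvPolynomial (Fin n ⊕ Fin n) K)
      ∈ bei K (lineG n) := by
  rw [← xv_mul_yv, ← xv_mul_yv]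
  refine Ideal.subset_span ⟨i, j, ?_, ?_, rfl⟩
  · rw [Fin.lt_iff_val_lt_val]; omega
  · rw [lineG, SimpleGraph.fromRel_adj]
    exact ⟨by rw [Fin.ne_iff_vne]; omega, Or.inl hij⟩

def Wt (μ : D n) : ℕ := ∑ p ∈ Finset.range n, p * av μ p

lemma Wt_add (μ ν : D n) : Wt (μ + ν) = Wt μ + Wt ν := by
  unfold Wt
  rw [← Finset.sum_add_distrib]
  exact Finset.sum_congr rfl fun p _ => by rw [av_add]; ring

lemma Wt_Ex (i j : Fin n) : Wt (Ex i j) = (i : ℕ) := by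
  unfold Wt
  rw [Finset.sum_congr rfl (fun p _ => by rw [av_Ex])]
  rw [Finset.sum_congr rfl (fun p _ => by rw [mul_ite, mul_one, mul_zero]),
    Finset.sum_ite_eq' (Finset.range n)]
  simp [i.isLt]

lemma monomial_diff_mem (hn : 0 < n) (μ : D n) :
    (monomial μ 1 - monomial (NF μ) 1 : MvPolynomial (Fin n ⊕ Fin n) K)
      ∈ bei K (lineG n) := by
  suffices h : ∀ (k : ℕ) (μ : D n), Wt μ ≤ k →
      (monomial μ 1 - monomial (NF μ) 1 : MvPolynomial (Fin n ⊕ Fin n) K)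
        ∈ bei K (lineG n) by
    exact h (Wt μ) μ (le_refl _)
  intro k
  induction k with
  | zero =>
    intro μ hW
    by_cases hLN : leftNormal μ
    · rw [NF_fix hn hLN, sub_self]; exact zero_mem _
    · exfalso
      apply hLN
      intro p hav
      by_contra hbv
      have hp1 : p + 1 < n := by
        by_contra hc
        exact hav (av_eq_zero_of_ge μ (by omega))
      have : 0 < Wt μ := by
        unfold Wt
        have hmem : p + 1 ∈ Finset.range n := Finset.mem_range.mpr hp1
        refine Finset.sum_pos' (fun q _ => Nat.zero_le _) ⟨p+1, hmem, ?_⟩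
        have : 0 < av μ (p+1) := Nat.pos_of_ne_zero hav
        positivity
      omega
  | succ k ih =>
    intro μ hW
    by_cases hLN : leftNormal μ
    · rw [NF_fix hn hLN, sub_self]; exact zero_mem _
    have hex : ∃ p, av μ (p+1) ≠ 0 ∧ bv μ p ≠ 0 := by
      unfold leftNormal at hLN
      push_neg at hLN
      exact hLN
    obtain ⟨p, hav, hbv⟩ := hex
    have hp1 : p + 1 < n := by
      by_contra hc
      exact hav (av_eq_zero_of_ge μ (by omega))
    have hav' : 1 ≤ μ (Sum.inl (⟨p+1, hp1⟩ : Fin n)) := by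
      rw [av, dif_pos hp1] at hav
      omega
    have hbv' : 1 ≤ μ (Sum.inr (⟨p, by omega⟩ : Fin n)) := by
      rw [bv, dif_pos (show p < n by omega)] at hbv
      omega
    set i : Fin n := ⟨p, by omega⟩ with hi
    set i1 : Fin n := ⟨p+1, hp1⟩ with hi1
    have key : ∀ a, Ex i1 i a ≤ μ a := by
      intro a
      rw [Ex, Finsupp.add_apply, Finsupp.single_apply, Finsupp.single_apply]
      by_cases h1 : (Sum.inl i1 : Fin n ⊕ Fin n) = a
      · rw [if_pos h1, if_neg (by rw [← h1]; simp), add_zero, ← h1]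
        exact hav'
      · rw [if_neg h1, zero_add]
        by_cases h2 : (Sum.inr i : Fin n ⊕ Fin n) = a
        · rw [if_pos h2, ← h2]
          exact hbv'
        · rw [if_neg h2]
          exact Nat.zero_le _
    set τ : D n := μ - Ex i1 i with hτ
    have hμ : μ = τ + Ex i1 i := by
      ext a
      rw [Finsupp.add_apply, hτ, Finsupp.tsub_apply]
      have := key a
      omega
    have hii : i < i1 := by rw [Fin.lt_iff_val_lt_val]; exact Nat.lt_succ_self p
    have hNF : NF (τ + Ex i i1) = NF μ := by
      rw [hμ]
      exact NF_add_Ex_eq hii (by rintro ⟨q, h1, h2, _⟩; simp [hi, hi1] at h1 h2; omega)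
    have hWτ : Wt (τ + Ex i i1) ≤ k := by
      have h1 : Wt μ = Wt τ + (p+1) := by rw [hμ, Wt_add, Wt_Ex]
      have h2 : Wt (τ + Ex i i1) = Wt τ + p := by rw [Wt_add, Wt_Ex]
      omega
    have hmem1 : (monomial μ 1 - monomial (τ + Ex i i1) 1 :
        MvPolynomial (Fin n ⊕ Fin n) K) ∈ bei K (lineG n) := by
      have hgen := line_gen_mem K (i := i) (j := i1) rfl
      have h3 := Ideal.mul_mem_left _ (monomial τ 1) hgen
      rw [mul_sub, monomial_mul, monomial_mul, one_mul] at h3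
      have hneg := Submodule.neg_mem _ h3
      rw [neg_sub] at hneg
      rw [hμ]
      exact hneg
    have hmem2 := ih (τ + Ex i i1) hWτ
    rw [hNF] at hmem2
    rw [← sub_add_sub_cancel (monomial μ 1) (monomial (τ + Ex i i1) 1)
      (monomial (NF μ) 1)]
    exact Submodule.add_mem _ hmem1 hmem2

end Poly

section Poly2
variable (K : Type) [Field K] {n : ℕ}

lemma mul_pair_expand (f : MvPolynomial (Fin n ⊕ Fin n) K) (e e' : D n) :
    f * (monomial e 1 - monomial e' 1)
      = ∑ d ∈ f.support, (monomial (d+e) (coeff d f) - monomial (d+e') (coeff d f)) := by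
  conv_lhs => rw [as_sum f]
  rw [Finset.sum_mul]
  refine Finset.sum_congr rfl fun d _ => ?_
  rw [mul_sub, monomial_mul, monomial_mul, mul_one]

lemma Phi_mul_pair (e e' : D n) (hee : ∀ d : D n, NF (d + e) = NF (d + e'))
    (f : MvPolynomial (Fin n ⊕ Fin n) K) :
    Phi K (f * (monomial e 1 - monomial e' 1)) = 0 := by
  rw [mul_pair_expand, map_sum]
  refine Finset.sum_eq_zero fun d _ => ?_
  rw [map_sub, Phi_monomial, Phi_monomial, hee d, sub_self]

lemma line_adj {i j : Fin n} (hij : i < j) (hadj : (lineG n).Adj i j) :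
    (j:ℕ) = (i:ℕ) + 1 := by
  rw [lineG, SimpleGraph.fromRel_adj] at hadj
  have hij' : (i:ℕ) < (j:ℕ) := hij
  obtain ⟨hne, h | h⟩ := hadj
  · exact h
  · omega

lemma Phi_mul_I {h : MvPolynomial (Fin n ⊕ Fin n) K} (hh : h ∈ bei K (lineG n)) :
    ∀ f, Phi K (f * h) = 0 := by
  refine Submodule.span_induction ?_ ?_ ?_ ?_ hh
  · rintro x ⟨i, j, hij, hadj, rfl⟩ f
    have hj := line_adj hij hadj
    rw [xv_mul_yv, xv_mul_yv]
    refine Phi_mul_pair K _ _ (fun d => NF_add_Ex_eq hij ?_) f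
    rintro ⟨q, h1, h2, _⟩
    omega
  · intro f
    rw [mul_zero, map_zero]
  · intro x y _ _ hx hy f
    rw [mul_add, map_add, hx f, hy f, add_zero]
  · intro a x _ hx f
    rw [smul_eq_mul, show f * (a * x) = (f * a) * x by ring]
    exact hx (f * a)

lemma sub_Phi_mem (hn : 0 < n) (f : MvPolynomial (Fin n ⊕ Fin n) K) :
    f - Phi K f ∈ bei K (lineG n) := by
  have h1 : f - Phi K f
      = ∑ d ∈ f.support, (monomial d (coeff d f) - monomial (NF d) (coeff d f)) := by
    rw [Finset.sum_sub_distrib, ← Phi_apply, ← as_sum]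
  rw [h1]
  refine Submodule.sum_mem _ fun d _ => ?_
  have h2 : monomial d (coeff d f) - monomial (NF d) (coeff d f)
      = C (coeff d f) * (monomial d 1 - monomial (NF d) 1) := by
    rw [mul_sub, C_mul_monomial, C_mul_monomial, mul_one]
  rw [h2]
  exact Ideal.mul_mem_left _ _ (monomial_diff_mem K hn d)

lemma mem_I_iff (hn : 0 < n) (h : MvPolynomial (Fin n ⊕ Fin n) K) :
    h ∈ bei K (lineG n) ↔ Phi K h = 0 := by
  constructor
  · intro hh
    have := Phi_mul_I K hh 1
    rwa [one_mul] at this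
  · intro hPhi
    have := sub_Phi_mem K hn h
    rwa [hPhi, sub_zero] at this

end Poly2

section Key
variable (K : Type) [Field K] {n : ℕ}

def gapQ (μ : D n) : ℕ :=
  if hx : ∃ q, 0 < q ∧ q < n - 1 ∧ cv μ q = 0 then Nat.find hx else 0

lemma gapQ_spec {μ : D n} (hs : splitP μ 0 (n-1)) :
    0 < gapQ μ ∧ gapQ μ < n - 1 ∧ cv μ (gapQ μ) = 0 := by
  have hs' : ∃ q, 0 < q ∧ q < n - 1 ∧ cv μ q = 0 := hs
  rw [gapQ, dif_pos hs']
  exact Nat.find_spec hs'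

theorem key_lemma (hn : 0 < n) (f : MvPolynomial (Fin n ⊕ Fin n) K)
    (hf : f * gElt K hn ∈ bei K (lineG n)) {i j : Fin n} (hij : i < j) :
    f * (xv K i * yv K j - xv K j * yv K i) ∈ bei K (lineG n) := by
  have hg : gElt K hn = monomial (E1 hn) 1 - monomial (E2 hn) 1 := by
    rw [gElt, xv_mul_yv, xv_mul_yv]; rfl
  set f' := Phi K f with hf'
  have hLN : ∀ d ∈ f'.support, leftNormal d := by
    intro d hd
    rw [hf', Phi_apply] at hd
    have h2 := MvPolynomial.support_sum hd
    rw [Finset.mem_biUnion] at h2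
    obtain ⟨e, he, hd2⟩ := h2
    have h3 := MvPolynomial.support_monomial_subset hd2
    rw [Finset.mem_singleton] at h3
    rw [h3]
    exact NF_leftNormal hn e
  have hmain : Phi K (f' * (monomial (E1 hn) 1 - monomial (E2 hn) 1)) = 0 := by
    have h0 : Phi K (f * gElt K hn) = 0 := (mem_I_iff K hn _).mp hf
    have h1 : Phi K ((f - f') * gElt K hn) = 0 := by
      rw [mul_comm]
      exact Phi_mul_I K (sub_Phi_mem K hn f) _
    have h2 : f' * gElt K hn = f * gElt K hn - (f - f') * gElt K hn := by ring
    rw [← hg, h2, map_sub, h0, h1, sub_zero]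
  rw [mul_pair_expand, map_sum] at hmain
  simp only [map_sub, Phi_monomial] at hmain
  have claim : ∀ k : ℕ, ∀ d : D n, leftNormal d → splitP d 0 (n-1) →
      txv d - Av d (gapQ d) = k → coeff d f' = 0 := by
    intro k
    induction k using Nat.strong_induction_on with
    | _ k ih =>
      intro d hLNd hs hmeas
      by_cases hd : coeff d f' = 0
      · exact hd
      have hdsupp : d ∈ f'.support := MvPolynomial.mem_support_iff.mpr hd
      have hco := congrArg (coeff (NF (d + E1 hn))) hmain
      simp only [MvPolynomial.coeff_sum, MvPolynomial.coeff_sub, MvPolynomial.coeff_monomial,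
        MvPolynomial.coeff_zero] at hco
      rw [Finset.sum_sub_distrib] at hco
      have hL : (∑ e ∈ f'.support,
          if NF (e + E1 hn) = NF (d + E1 hn) then coeff e f' else 0) = coeff d f' := by
        rw [Finset.sum_eq_single_of_mem d hdsupp]
        · rw [if_pos rfl]
        · intro e he hne
          rw [if_neg]
          intro heq
          exact hne (NF_add_E1_inj hn (hLN e he) (hLN d hdsupp) heq)
      have hR : (∑ e ∈ f'.support,
          if NF (e + E2 hn) = NF (d + E1 hn) then coeff e f' else 0) = 0 := by
        refine Finset.sum_eq_zero fun e he => ?_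
        split_ifs with heq
        · obtain ⟨hc, htx, hA⟩ := NF_partner hn heq
          have hse : splitP e 0 (n-1) := by
            obtain ⟨q, hq1, hq2, hq3⟩ := hs
            exact ⟨q, hq1, hq2, by rw [hc q]; exact hq3⟩
          have hq0 := gapQ_spec hs
          have hq0e := gapQ_spec hse
          have hgq : gapQ e = gapQ d := by
            rw [gapQ, gapQ]
            have hx1 : ∃ q, 0 < q ∧ q < n - 1 ∧ cv e q = 0 := hse
            have hx2 : ∃ q, 0 < q ∧ q < n - 1 ∧ cv d q = 0 := hs
            rw [dif_pos hx1, dif_pos hx2]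
            refine le_antisymm (Nat.find_min' hx1 ?_) (Nat.find_min' hx2 ?_)
            · obtain ⟨a1, a2, a3⟩ := Nat.find_spec hx2
              exact ⟨a1, a2, by rw [hc _]; exact a3⟩
            · obtain ⟨a1, a2, a3⟩ := Nat.find_spec hx1
              exact ⟨a1, a2, by rw [← hc _]; exact a3⟩
          have hAe : Av e (gapQ d) = Av d (gapQ d) + 1 :=
            hA (gapQ d) hq0.1 hq0.2.1 hq0.2.2
          have hle' : Av e (gapQ d) ≤ txv e := Av_le_txv e _
          have hk : txv e - Av e (gapQ e) < k := by
            rw [hgq]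
            omega
          exact ih _ hk e (hLN e he) hse rfl
        · rfl
      rw [hL, hR, sub_zero] at hco
      exact hco
  have hzero : ∀ d, leftNormal d → splitP d 0 (n-1) → coeff d f' = 0 :=
    fun d hld hs => claim _ d hld hs rfl
  have hgoal : Phi K (f' * (xv K i * yv K j - xv K j * yv K i)) = 0 := by
    rw [xv_mul_yv, xv_mul_yv]
    have hdiff : xv K i * yv K j - xv K j * yv K i
        = monomial (Ex i j) 1 - monomial (Ex j i) 1 := by
      rw [xv_mul_yv, xv_mul_yv]
    rw [mul_pair_expand, map_sum]
    refine Finset.sum_eq_zero fun d hd => ?_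
    rw [map_sub, Phi_monomial, Phi_monomial]
    by_cases hsp : splitP d (i:ℕ) (j:ℕ)
    · have h0 : coeff d f' = 0 := by
        obtain ⟨q, h1, h2, h3⟩ := hsp
        have hjn : (j:ℕ) < n := j.isLt
        exact hzero d (hLN d hd) ⟨q, by omega, by omega, h3⟩
      rw [h0]
      simp
    · rw [NF_add_Ex_eq hij hsp, sub_self]
  have hGij : f * (xv K i * yv K j - xv K j * yv K i)
      = f' * (xv K i * yv K j - xv K j * yv K i)
        + (f - f') * (xv K i * yv K j - xv K j * yv K i) := by ring
  rw [hGij]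
  refine Submodule.add_mem _ ((mem_I_iff K hn _).mpr hgoal) ?_
  exact Ideal.mul_mem_right _ _ (sub_Phi_mem K hn f)

end Key


theorem statement11' (K : Type) [Field K] (n : ℕ) (hn : 0 < n) :
    (bei K (lineG n)).colon (Ideal.span {gElt K hn}) =
      (bei K (lineG n)).colon (bei K (⊤ : SimpleGraph (Fin n))) := by
  apply le_antisymm
  · intro f hf
    have hfg : f * gElt K hn ∈ bei K (lineG n) := Ideal.mem_colon_span_singleton.mp hf
    rw [Submodule.mem_colon]
    intro p hp
    refine Submodule.span_induction ?_ ?_ ?_ ?_ hp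
    · rintro x ⟨i, j, hij, _, rfl⟩
      rw [smul_eq_mul]
      exact key_lemma K hn f hfg hij
    · rw [smul_eq_mul, mul_zero]; exact zero_mem _
    · intro x y _ _ hx hy
      rw [smul_add]
      exact add_mem hx hy
    · intro a x _ hx
      rw [smul_eq_mul, smul_eq_mul, show f * (a * x) = a * (f * x) by ring]
      exact Ideal.mul_mem_left _ _ (by rwa [smul_eq_mul] at hx)
  · intro f hf
    rw [Ideal.mem_colon_span_singleton]
    rcases Nat.lt_or_ge n 2 with h2 | h2
    · have hn1 : n = 1 := by omega
      subst hn1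
      have hg0 : gElt K hn = 0 := by
        rw [gElt]
        exact sub_self _
      rw [hg0, mul_zero]
      exact zero_mem _
    · have hgmem : gElt K hn ∈ bei K (⊤ : SimpleGraph (Fin n)) := by
        refine Ideal.subset_span ⟨⟨0, hn⟩, ⟨n-1, by omega⟩, ?_, ?_, rfl⟩
        · rw [Fin.lt_iff_val_lt_val]
          simp only [Fin.val_mk]
          omega
        · rw [SimpleGraph.top_adj, Fin.ne_iff_vne]
          simp only [Fin.val_mk]
          omega
      have := Submodule.mem_colon.mp hf _ hgmem
      rwa [smul_eq_mul] at this



/-- Let `L` be the line (path) on `[n]`, `I_L` its binomial edge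
ideal, `g = x_1 y_n − x_n y_1`, and `J_G̃` the binomial edge ideal of the complete
graph on `[n]`.  Then `I_L : g = I_L : J_G̃`. -/
theorem statement11 (K : Type) [Field K] (n : ℕ) (hn : 0 < n) :
    (bei K (lineG n)).colon (Ideal.span {gElt K hn}) =
      (bei K (lineG n)).colon (bei K (⊤ : SimpleGraph (Fin n))) := by
  exact statement11' K n hn

end BEIPaper
end
end
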